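/- arXiv:1911.07969 — 11 statements merged into one kernel-verified Lean document; each statement's English description precedes it below -/
import Mathlib

section
/- For all nonnegative reals x1, x2, x3, x4 summing to 1, we have x1*x2*x3 + x1*x2*x4 + x1*x3*x4 + x2*x3*x4 <= 1/16. -/
theorem stmt_1 (x1 x2 x3 x4 : ℝ) (h1 : 0 ≤ x1) (h2 : 0 ≤ x2) (h3 : 0 ≤ x3) (h4 : 0 ≤ x4)
    (hsum : x1 + x2 + x3 + x4 = 1) :
    x1 * x2 * x3 + x1 * x2 * x4 + x1 * x3 * x4 + x2 * x3 * x4 ≤ 1 / 16 := by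
  nlinarith [sq_nonneg (x1+x2-x3-x4), sq_nonneg (x1-x2+x3-x4), sq_nonneg (x1-x2-x3+x4), sq_nonneg (x1-x2), sq_nonneg (x3-x4), sq_nonneg (x1-x3), sq_nonneg (x2-x4), sq_nonneg (x1-x4), sq_nonneg (x2-x3), mul_nonneg h1 h2, mul_nonneg h3 h4, mul_nonneg (mul_nonneg h1 h2) h3, mul_nonneg (mul_nonneg h1 h2) h4, mul_nonneg (mul_nonneg h1 h3) h4, mul_nonneg (mul_nonneg h2 h3) h4, sq_nonneg (x1+x2+x3+x4)]
end

section
/- Let G be the 3-graph on vertex set {1,...,6} whose edges are all 3-element subsets of {1,...,6} except {1,2,3}, {1,2,6}, {3,4,5}, {4,5,6}. Then for all nonnegative reals x1,...,x6 summing to 1, the sum over edges E of G of the product x_i*x_j*x_k (for E = {i,j,k}) is at most 2/27, with equality only if x1 = x2 = ... = x6 = 1/6. -/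
/-- The 3-graph `G_6^2` on vertex set `Fin 6`: all 3-element subsets except
`{1,2,3}, {1,2,6}, {3,4,5}, {4,5,6}` (written with vertices `0,…,5`). -/
def G62 : Finset (Finset (Fin 6)) :=
  (Finset.univ.powersetCard 3).filter
    (fun E => E ∉ ({{0, 1, 2}, {0, 1, 5}, {2, 3, 4}, {3, 4, 5}} : Finset (Finset (Fin 6))))

lemma key_identity (a b c d e f : ℝ) (hs : a + b + c + d + e + f = 1) :
    2 / 27 - (a * b * d + a * b * e + a * c * d + a * c * e + a * c * f + a * d * e +
      a * d * f + a * e * f + b * c * d + b * c * e + b * c * f + b * d * e +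
      b * d * f + b * e * f + c * d * f + c * e * f) =
    (3 * (c + f) - 1) ^ 2 * (3 * (c + f) + 5) / 432
      + (a + b + d + e) * (c - f) ^ 2 / 4
      + (d + e) * (a - b) ^ 2 / 4
      + (a + b) * (d - e) ^ 2 / 4
      + ((c + f) + (a + b + d + e) / 4) * (a + b - d - e) ^ 2 / 4 := by
  have hf : f = 1 - (a + b + c + d + e) := by linarith
  subst hf
  ring

set_option maxHeartbeats 1000000 in
lemma eq_case (a b c d e f : ℝ) (ha : 0 ≤ a) (hb : 0 ≤ b) (hc : 0 ≤ c) (hd : 0 ≤ d)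
    (he : 0 ≤ e) (hf : 0 ≤ f) (hs : a + b + c + d + e + f = 1)
    (hz : (3 * (c + f) - 1) ^ 2 * (3 * (c + f) + 5) / 432
      + (a + b + d + e) * (c - f) ^ 2 / 4
      + (d + e) * (a - b) ^ 2 / 4
      + (a + b) * (d - e) ^ 2 / 4
      + ((c + f) + (a + b + d + e) / 4) * (a + b - d - e) ^ 2 / 4 = 0) :
    a = 1 / 6 ∧ b = 1 / 6 ∧ c = 1 / 6 ∧ d = 1 / 6 ∧ e = 1 / 6 ∧ f = 1 / 6 := by
  have t1 : 0 ≤ (3 * (c + f) - 1) ^ 2 * (3 * (c + f) + 5) / 432 := by positivity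
  have t2 : 0 ≤ (a + b + d + e) * (c - f) ^ 2 / 4 := by positivity
  have t3 : 0 ≤ (d + e) * (a - b) ^ 2 / 4 := by positivity
  have t4 : 0 ≤ (a + b) * (d - e) ^ 2 / 4 := by positivity
  have t5 : 0 ≤ ((c + f) + (a + b + d + e) / 4) * (a + b - d - e) ^ 2 / 4 := by positivity
  have hw : c + f = 1 / 3 := by
    have h1 : (3 * (c + f) - 1) ^ 2 * (3 * (c + f) + 5) = 0 := by linarith
    have h3 : (3 * (c + f) - 1) ^ 2 = 0 := by
      rcases mul_eq_zero.1 h1 with h | h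
      · exact h
      · linarith
    have h4 : 3 * (c + f) - 1 = 0 := sq_eq_zero_iff.1 h3
    linarith
  have ht : a + b + d + e = 2 / 3 := by linarith
  have hAB : a + b = d + e := by
    have z5 : ((c + f) + (a + b + d + e) / 4) * (a + b - d - e) ^ 2 / 4 = 0 := by linarith
    have hcoef : (c + f) + (a + b + d + e) / 4 = 1 / 2 := by linarith
    rw [hcoef] at z5
    have h : (a + b - d - e) ^ 2 = 0 := by linarith
    have := sq_eq_zero_iff.1 h
    linarith
  have hA : a + b = 1 / 3 := by linarith
  have hB : d + e = 1 / 3 := by linarith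
  have hcf : c = f := by
    have z2 : (a + b + d + e) * (c - f) ^ 2 / 4 = 0 := by linarith
    rw [ht] at z2
    have h : (c - f) ^ 2 = 0 := by linarith
    have := sq_eq_zero_iff.1 h
    linarith
  have hab : a = b := by
    have z3 : (d + e) * (a - b) ^ 2 / 4 = 0 := by linarith
    rw [hB] at z3
    have h : (a - b) ^ 2 = 0 := by linarith
    have := sq_eq_zero_iff.1 h
    linarith
  have hde : d = e := by
    have z4 : (a + b) * (d - e) ^ 2 / 4 = 0 := by linarith
    rw [hA] at z4
    have h : (d - e) ^ 2 = 0 := by linarith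
    have := sq_eq_zero_iff.1 h
    linarith
  refine ⟨by linarith, by linarith, by linarith, by linarith, by linarith, by linarith⟩

set_option maxHeartbeats 1000000 in
theorem stmt_2 (x : Fin 6 → ℝ) (hx : ∀ i, 0 ≤ x i) (hsum : ∑ i, x i = 1) :
    (∑ E ∈ G62, ∏ i ∈ E, x i ≤ 2 / 27) ∧
    (∑ E ∈ G62, ∏ i ∈ E, x i = 2 / 27 → ∀ i, x i = 1 / 6) := by
  have hG : G62 = {{0, 1, 3}, {0, 1, 4}, {0, 2, 3}, {0, 2, 4}, {0, 2, 5}, {0, 3, 4},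
      {0, 3, 5}, {0, 4, 5}, {1, 2, 3}, {1, 2, 4}, {1, 2, 5}, {1, 3, 4}, {1, 3, 5},
      {1, 4, 5}, {2, 3, 5}, {2, 4, 5}} := by decide
  have hsum' : x 0 + x 1 + x 2 + x 3 + x 4 + x 5 = 1 := by
    rw [Fin.sum_univ_six] at hsum
    linarith
  have hP : ∑ E ∈ G62, ∏ i ∈ E, x i =
      x 0 * x 1 * x 3 + x 0 * x 1 * x 4 + x 0 * x 2 * x 3 + x 0 * x 2 * x 4 + x 0 * x 2 * x 5
      + x 0 * x 3 * x 4 + x 0 * x 3 * x 5 + x 0 * x 4 * x 5 + x 1 * x 2 * x 3 + x 1 * x 2 * x 4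
      + x 1 * x 2 * x 5 + x 1 * x 3 * x 4 + x 1 * x 3 * x 5 + x 1 * x 4 * x 5 + x 2 * x 3 * x 5
      + x 2 * x 4 * x 5 := by
    rw [hG]
    simp (config := { decide := true }) [Finset.sum_insert, Finset.prod_insert]
    ring
  have hid := key_identity (x 0) (x 1) (x 2) (x 3) (x 4) (x 5) hsum'
  have t1 : 0 ≤ (3 * (x 2 + x 5) - 1) ^ 2 * (3 * (x 2 + x 5) + 5) / 432 := by
    have := hx 2; have := hx 5; positivity
  have t2 : 0 ≤ (x 0 + x 1 + x 3 + x 4) * (x 2 - x 5) ^ 2 / 4 := by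
    have := hx 0; have := hx 1; have := hx 3; have := hx 4; positivity
  have t3 : 0 ≤ (x 3 + x 4) * (x 0 - x 1) ^ 2 / 4 := by
    have := hx 3; have := hx 4; positivity
  have t4 : 0 ≤ (x 0 + x 1) * (x 3 - x 4) ^ 2 / 4 := by
    have := hx 0; have := hx 1; positivity
  have t5 : 0 ≤ ((x 2 + x 5) + (x 0 + x 1 + x 3 + x 4) / 4) * (x 0 + x 1 - x 3 - x 4) ^ 2 / 4 := by
    have := hx 0; have := hx 1; have := hx 2; have := hx 3; have := hx 4; have := hx 5
    positivity
  constructor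
  · rw [hP]; linarith
  · intro heq i
    rw [hP] at heq
    have hz : (3 * (x 2 + x 5) - 1) ^ 2 * (3 * (x 2 + x 5) + 5) / 432
        + (x 0 + x 1 + x 3 + x 4) * (x 2 - x 5) ^ 2 / 4
        + (x 3 + x 4) * (x 0 - x 1) ^ 2 / 4
        + (x 0 + x 1) * (x 3 - x 4) ^ 2 / 4
        + ((x 2 + x 5) + (x 0 + x 1 + x 3 + x 4) / 4) * (x 0 + x 1 - x 3 - x 4) ^ 2 / 4 = 0 := by
      linarith
    obtain ⟨e0, e1, e2, e3, e4, e5⟩ := eq_case (x 0) (x 1) (x 2) (x 3) (x 4) (x 5)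
      (hx 0) (hx 1) (hx 2) (hx 3) (hx 4) (hx 5) hsum' hz
    fin_cases i
    · exact e0
    · exact e1
    · exact e2
    · exact e3
    · exact e4
    · exact e5
end

section
/- For nonnegative reals a, b, c with 2a + 2b + 2c = 1 and d = (b+c)/2, we have 2a^2(b+c) + 8abc + 2bc(b+c) <= 2(a+d)^2 * 2d <= 2/27. -/
theorem stmt_3 (a b c d : ℝ) (ha : 0 ≤ a) (hb : 0 ≤ b) (hc : 0 ≤ c)
    (hsum : 2 * a + 2 * b + 2 * c = 1) (hd : d = (b + c) / 2) :
    2 * a ^ 2 * (b + c) + 8 * a * b * c + 2 * b * c * (b + c)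
      ≤ 2 * ((a + d) ^ 2 * (2 * d)) ∧
    2 * ((a + d) ^ 2 * (2 * d)) ≤ 2 / 27 := by
  subst hd
  constructor
  · nlinarith [sq_nonneg (b - c), mul_nonneg ha (sq_nonneg (b - c)), mul_nonneg hb hc, mul_nonneg (add_nonneg hb hc) (sq_nonneg (b - c))]
  · nlinarith [sq_nonneg (a - (b + c) / 2), sq_nonneg (b - c), sq_nonneg (a + b + c), mul_nonneg (add_nonneg hb hc) (sq_nonneg (2 * a - b - c))]
end

section
/- Let T be a 3-uniform hypergraph on k >= 7 vertices such that every pair of vertices of T is contained in some edge (T is 2-covered), and such that for every set S of 7 vertices of T, the induced subhypergraph T[S] has transversal number at most 1. Then T is a star, i.e., there is a vertex v contained in every edge of T. -/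
private lemma card_u4 {V : Type*} [DecidableEq V] (A B C D : Finset V) :
    (A ∪ B ∪ C ∪ D).card ≤ A.card + (B \ A).card + (C \ A).card + (D \ A).card := by
  have hsub : A ∪ B ∪ C ∪ D ⊆ A ∪ ((B \ A) ∪ ((C \ A) ∪ (D \ A))) := by
    intro x hx
    simp only [Finset.mem_union, Finset.mem_sdiff] at *
    tauto
  calc (A ∪ B ∪ C ∪ D).card ≤ (A ∪ ((B \ A) ∪ ((C \ A) ∪ (D \ A)))).card :=
        Finset.card_le_card hsub
    _ ≤ A.card + ((B \ A) ∪ ((C \ A) ∪ (D \ A))).card := Finset.card_union_le _ _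
    _ ≤ A.card + ((B \ A).card + ((C \ A) ∪ (D \ A)).card) := by
        gcongr; exact Finset.card_union_le _ _
    _ ≤ A.card + ((B \ A).card + ((C \ A).card + (D \ A).card)) := by
        gcongr; exact Finset.card_union_le _ _
    _ = _ := by ring

private lemma sdiff_le_two {V : Type*} [DecidableEq V] {B A : Finset V} (hB : B.card = 3)
    {x : V} (hxB : x ∈ B) (hxA : x ∈ A) : (B \ A).card ≤ 2 := by
  have hss : B \ A ⊂ B := by
    refine ⟨Finset.sdiff_subset, fun hsub => ?_⟩
    exact (Finset.mem_sdiff.mp (hsub hxB)).2 hxA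
  have := Finset.card_lt_card hss
  omega

private lemma sdiff_le_one {V : Type*} [DecidableEq V] {B A : Finset V} (hB : B.card = 3)
    {x y : V} (hxy : x ≠ y) (hxB : x ∈ B) (hyB : y ∈ B) (hxA : x ∈ A) (hyA : y ∈ A) :
    (B \ A).card ≤ 1 := by
  have hpA : ({x, y} : Finset V) ⊆ A := by
    intro z hz; simp only [Finset.mem_insert, Finset.mem_singleton] at hz
    rcases hz with rfl | rfl <;> assumption
  have hpB : ({x, y} : Finset V) ⊆ B := by
    intro z hz; simp only [Finset.mem_insert, Finset.mem_singleton] at hz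
    rcases hz with rfl | rfl <;> assumption
  have h1 : B \ A ⊆ B \ ({x, y} : Finset V) := Finset.sdiff_subset_sdiff (le_refl _) hpA
  have h2 : (B \ ({x, y} : Finset V)).card = B.card - ({x, y} : Finset V).card :=
    Finset.card_sdiff_of_subset hpB
  have h3 : ({x, y} : Finset V).card = 2 := Finset.card_pair hxy
  have := Finset.card_le_card h1
  omega

private lemma aux_hit {V : Type*} [Fintype V] [DecidableEq V] (hV : 7 ≤ Fintype.card V)
    {T : Finset (Finset V)}
    (htau : ∀ S : Finset V, S.card = 7 → ∃ x : V, ∀ E ∈ T, E ⊆ S → x ∈ E)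
    (A B C D : Finset V) (hA : A ∈ T) (hB : B ∈ T) (hC : C ∈ T) (hD : D ∈ T)
    (hU : (A ∪ B ∪ C ∪ D).card ≤ 7)
    (hint : ∀ x, x ∈ A → x ∈ B → x ∈ C → x ∈ D → False) : False := by
  obtain ⟨S, hS, hS7⟩ := Finset.exists_superset_card_eq hU hV
  obtain ⟨x, hx⟩ := htau S hS7
  have sA : A ⊆ S := fun y hy => hS (by simp [hy])
  have sB : B ⊆ S := fun y hy => hS (by simp [hy])
  have sC : C ⊆ S := fun y hy => hS (by simp [hy])
  have sD : D ⊆ S := fun y hy => hS (by simp [hy])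
  exact hint x (hx A hA sA) (hx B hB sB) (hx C hC sC) (hx D hD sD)

theorem stmt_5 {V : Type*} [Fintype V] [DecidableEq V] (hV : 7 ≤ Fintype.card V)
    (T : Finset (Finset V)) (hcard : ∀ E ∈ T, E.card = 3)
    (hcov : ∀ u v : V, u ≠ v → ∃ E ∈ T, u ∈ E ∧ v ∈ E)
    (htau : ∀ S : Finset V, S.card = 7 → ∃ x : V, ∀ E ∈ T, E ⊆ S → x ∈ E) :
    ∃ v : V, ∀ E ∈ T, v ∈ E := by
  by_contra h
  push_neg at h
  -- h : ∀ v, ∃ E ∈ T, v ∉ E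
  have h2 : 1 < Fintype.card V := by omega
  obtain ⟨u, v, huv⟩ := Fintype.exists_pair_of_one_lt_card h2
  obtain ⟨E1, hE1T, hu1, hv1⟩ := hcov u v huv
  obtain ⟨a, b, c, hab, hac, hbc, hE1e⟩ := Finset.card_eq_three.mp (hcard E1 hE1T)
  have haE1 : a ∈ E1 := by rw [hE1e]; simp
  have hbE1 : b ∈ E1 := by rw [hE1e]; simp
  have hcE1 : c ∈ E1 := by rw [hE1e]; simp
  obtain ⟨Ea, hEaT, haEa⟩ := h a
  obtain ⟨Eb, hEbT, hbEb⟩ := h b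
  obtain ⟨Ec, hEcT, hcEc⟩ := h c
  -- all edges pairwise intersect
  have hmeet : ∀ E ∈ T, ∀ F ∈ T, ∃ x, x ∈ E ∧ x ∈ F := by
    intro E hE F hF
    by_contra hc
    push_neg at hc
    refine aux_hit hV htau E F E E hE hF hE hE ?_ ?_
    · have := card_u4 E F E E
      have h1 : (F \ E).card ≤ F.card := Finset.card_le_card Finset.sdiff_subset
      have h2 : (E \ E).card = 0 := by simp
      have := hcard E hE; have := hcard F hF
      omega
    · intro x hxE hxF _ _; exact hc x hxE hxF
  have hmem : ∀ x, x ∈ E1 → x = a ∨ x = b ∨ x = c := by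
    intro x hx; rw [hE1e] at hx
    simpa using hx
  -- triple contradiction helper
  have triple : ∀ E F : Finset V, E ∈ T → F ∈ T →
      (∀ x, x ∈ E1 → x ∈ E → x ∈ F → False) → False := by
    intro E F hET hFT hint
    refine aux_hit hV htau E1 E F E1 hE1T hET hFT hE1T ?_ ?_
    · have := card_u4 E1 E F E1
      obtain ⟨p, hpE, hpE1⟩ := hmeet E hET E1 hE1T
      obtain ⟨q, hqF, hqE1⟩ := hmeet F hFT E1 hE1T
      have h1 : (E \ E1).card ≤ 2 := sdiff_le_two (hcard E hET) hpE hpE1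
      have h2 : (F \ E1).card ≤ 2 := sdiff_le_two (hcard F hFT) hqF hqE1
      have h3 : (E1 \ E1).card = 0 := by simp
      have := hcard E1 hE1T
      omega
    · intro x hx1 hxE hxF _; exact hint x hx1 hxE hxF
  by_cases hc' : c ∈ Ea ∧ c ∈ Eb
  case neg =>
    refine triple Ea Eb hEaT hEbT ?_
    intro x hx1 hxa hxb
    rcases hmem x hx1 with rfl | rfl | rfl
    · exact haEa hxa
    · exact hbEb hxb
    · exact hc' ⟨hxa, hxb⟩
  by_cases hb' : b ∈ Ea ∧ b ∈ Ec
  case neg =>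
    refine triple Ea Ec hEaT hEcT ?_
    intro x hx1 hxa hxc
    rcases hmem x hx1 with rfl | rfl | rfl
    · exact haEa hxa
    · exact hb' ⟨hxa, hxc⟩
    · exact hcEc hxc
  by_cases ha' : a ∈ Eb ∧ a ∈ Ec
  case neg =>
    refine triple Eb Ec hEbT hEcT ?_
    intro x hx1 hxb hxc
    rcases hmem x hx1 with rfl | rfl | rfl
    · exact ha' ⟨hxb, hxc⟩
    · exact hbEb hxb
    · exact hcEc hxc
  -- final quadruple case
  refine aux_hit hV htau E1 Ea Eb Ec hE1T hEaT hEbT hEcT ?_ ?_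
  · have := card_u4 E1 Ea Eb Ec
    have h1 : (Ea \ E1).card ≤ 1 :=
      sdiff_le_one (hcard Ea hEaT) hbc hb'.1 hc'.1 hbE1 hcE1
    have h2 : (Eb \ E1).card ≤ 1 :=
      sdiff_le_one (hcard Eb hEbT) hac ha'.1 hc'.2 haE1 hcE1
    have h3 : (Ec \ E1).card ≤ 1 :=
      sdiff_le_one (hcard Ec hEcT) hab ha'.2 hb'.2 haE1 hbE1
    have := hcard E1 hE1T
    omega
  · intro x hx1 hxa hxb hxc
    rcases hmem x hx1 with rfl | rfl | rfl
    · exact haEa hxa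
    · exact hbEb hxb
    · exact hcEc hxc
end

section
/- Let n be a multiple of 3, fix a balanced partition [n] = V_1 ∪ V_2 ∪ V_3, and within each V_j fix a partition V_j = V_{1,j} ∪ V_{2,j} with |V_{1,j}| = m. Let G(n,m) be the 3-graph defined as the union of: triples within some V_{i,j}; triples with two vertices in V_{1,j} and one in V_{2,j}; two vertices in V_{1,j} and one in V_{j+1}; two vertices in V_{2,j} and one in V_{1,j+1}; two vertices in V_{2,j} and one in V_{j-1}; and one vertex in each of V_{1,j}, V_{2,j}, V_{j+1} (indices of V_j cyclic mod 3). Then the number of 4-element vertex sets inducing exactly 3 edges of G(n,m) (i.e., inducing a copy of K_4^{3-}) equals (1/6) * m^2 * (n-3m) * (n-3m-3). -/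
open Finset

/-- Explicit edge predicate on the 6 type-counts (x_j = count in V1 j, y_j = count in V2 j). -/
def edgeP (x0 y0 x1 y1 x2 y2 : ℕ) : Prop :=
  ((x0 = 3 ∨ y0 = 3) ∨ (x0 = 2 ∧ y0 = 1) ∨ (x0 = 2 ∧ x1 + y1 = 1) ∨
    (y0 = 2 ∧ x1 = 1) ∨ (y0 = 2 ∧ x2 + y2 = 1) ∨ (x0 = 1 ∧ y0 = 1 ∧ x1 + y1 = 1)) ∨
  ((x1 = 3 ∨ y1 = 3) ∨ (x1 = 2 ∧ y1 = 1) ∨ (x1 = 2 ∧ x2 + y2 = 1) ∨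
    (y1 = 2 ∧ x2 = 1) ∨ (y1 = 2 ∧ x0 + y0 = 1) ∨ (x1 = 1 ∧ y1 = 1 ∧ x2 + y2 = 1)) ∨
  ((x2 = 3 ∨ y2 = 3) ∨ (x2 = 2 ∧ y2 = 1) ∨ (x2 = 2 ∧ x0 + y0 = 1) ∨
    (y2 = 2 ∧ x0 = 1) ∨ (y2 = 2 ∧ x1 + y1 = 1) ∨ (x2 = 1 ∧ y2 = 1 ∧ x0 + y0 = 1))

instance (x0 y0 x1 y1 x2 y2 : ℕ) : Decidable (edgeP x0 y0 x1 y1 x2 y2) := by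
  unfold edgeP; exact inferInstance

def edgeC (c : Fin 3 → Fin 2 → ℕ) : Prop :=
  ∃ j : Fin 3,
    (c j 0 = 3 ∨ c j 1 = 3) ∨
    (c j 0 = 2 ∧ c j 1 = 1) ∨
    (c j 0 = 2 ∧ c (j+1) 0 + c (j+1) 1 = 1) ∨
    (c j 1 = 2 ∧ c (j+1) 0 = 1) ∨
    (c j 1 = 2 ∧ c (j-1) 0 + c (j-1) 1 = 1) ∨
    (c j 0 = 1 ∧ c j 1 = 1 ∧ c (j+1) 0 + c (j+1) 1 = 1)

instance : DecidablePred edgeC := fun c => by unfold edgeC; exact inferInstance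

lemma edgeC_iff (c : Fin 3 → Fin 2 → ℕ) :
    edgeC c ↔ edgeP (c 0 0) (c 0 1) (c 1 0) (c 1 1) (c 2 0) (c 2 1) := by
  unfold edgeC edgeP
  constructor
  · rintro ⟨j, h⟩
    fin_cases j
    · exact Or.inl h
    · exact Or.inr (Or.inl h)
    · exact Or.inr (Or.inr h)
  · rintro (h | h | h)
    exacts [⟨0, h⟩, ⟨1, h⟩, ⟨2, h⟩]

/-- number of induced edges in a 4-set with given type counts. -/
def fP (x0 y0 x1 y1 x2 y2 : ℕ) : ℕ :=
  x0 * (if edgeP (x0-1) y0 x1 y1 x2 y2 then 1 else 0) +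
  y0 * (if edgeP x0 (y0-1) x1 y1 x2 y2 then 1 else 0) +
  x1 * (if edgeP x0 y0 (x1-1) y1 x2 y2 then 1 else 0) +
  y1 * (if edgeP x0 y0 x1 (y1-1) x2 y2 then 1 else 0) +
  x2 * (if edgeP x0 y0 x1 y1 (x2-1) y2 then 1 else 0) +
  y2 * (if edgeP x0 y0 x1 y1 x2 (y2-1) then 1 else 0)

def goodP (x0 y0 x1 y1 x2 y2 : ℕ) : Prop :=
  (x0 = 1 ∧ x1 = 1 ∧ y0 = 2) ∨ (x1 = 1 ∧ x2 = 1 ∧ y1 = 2) ∨ (x2 = 1 ∧ x0 = 1 ∧ y2 = 2)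

instance (x0 y0 x1 y1 x2 y2 : ℕ) : Decidable (goodP x0 y0 x1 y1 x2 y2) := by
  unfold goodP; exact inferInstance

lemma keyFin : ∀ x0 y0 x1 y1 x2 y2 : Fin 5,
    (x0:ℕ) + y0 + x1 + y1 + x2 + y2 = 4 →
    (fP x0 y0 x1 y1 x2 y2 = 3 ↔ goodP (x0:ℕ) y0 x1 y1 x2 y2) := by decide

lemma keyP (x0 y0 x1 y1 x2 y2 : ℕ) (h : x0 + y0 + x1 + y1 + x2 + y2 = 4) :
    (fP x0 y0 x1 y1 x2 y2 = 3 ↔ goodP x0 y0 x1 y1 x2 y2) :=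
  keyFin ⟨x0, by omega⟩ ⟨y0, by omega⟩ ⟨x1, by omega⟩ ⟨y1, by omega⟩ ⟨x2, by omega⟩
    ⟨y2, by omega⟩ h


lemma two_choose_two (k : ℕ) : 2 * k.choose 2 = k * (k - 1) := by
  induction k with
  | zero => rfl
  | succ k ih =>
    rw [Nat.choose_succ_succ, Nat.mul_add, ih, Nat.choose_one_right, Nat.succ_sub_one]
    cases k with
    | zero => rfl
    | succ j => rw [Nat.succ_sub_one]; ring

lemma powersetCard_three {α : Type*} [DecidableEq α] (S : Finset α) (h4 : S.card = 4) :
    S.powersetCard 3 = S.image S.erase := by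
  ext T
  simp only [mem_powersetCard, mem_image]
  constructor
  · rintro ⟨hsub, hcard⟩
    have h1 : (S \ T).card = 1 := by rw [card_sdiff_of_subset hsub]; omega
    obtain ⟨v, hv⟩ := card_eq_one.mp h1
    refine ⟨v, ?_, ?_⟩
    · have : v ∈ S \ T := hv ▸ mem_singleton_self v
      exact (mem_sdiff.mp this).1
    · rw [erase_eq, ← hv, Finset.sdiff_sdiff_eq_self hsub]
  · rintro ⟨v, hv, rfl⟩
    exact ⟨erase_subset _ _, by rw [card_erase_of_mem hv, h4]⟩

lemma card_erase_inter_mem {α : Type*} [DecidableEq α] {S T : Finset α} {v : α}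
    (hvS : v ∈ S) (hvT : v ∈ T) : ((S.erase v) ∩ T).card = (S ∩ T).card - 1 := by
  rw [erase_inter, card_erase_of_mem (mem_inter.mpr ⟨hvS, hvT⟩)]

lemma card_erase_inter_not {α : Type*} [DecidableEq α] (S : Finset α) {T : Finset α} {v : α}
    (hvT : v ∉ T) : ((S.erase v) ∩ T).card = (S ∩ T).card := by
  rw [erase_inter, erase_eq_of_notMem (fun h => hvT (mem_inter.mp h).2)]

lemma card_slice {α : Type*} [DecidableEq α] [Fintype α] (A B C : Finset α)
    (hAB : Disjoint A B) (hAC : Disjoint A C) (hBC : Disjoint B C) :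
    ((Finset.univ.powersetCard 4).filter
      (fun S => (S ∩ A).card = 1 ∧ (S ∩ B).card = 1 ∧ (S ∩ C).card = 2)).card
    = A.card * B.card * C.card.choose 2 := by
  classical
  set T : Finset (α × α × Finset α) := A ×ˢ B ×ˢ C.powersetCard 2 with hT
  set f : α × α × Finset α → Finset α := fun x => insert x.1 (insert x.2.1 x.2.2) with hf
  have hmemT : ∀ x ∈ T, x.1 ∈ A ∧ x.2.1 ∈ B ∧ x.2.2 ⊆ C ∧ x.2.2.card = 2 := by
    intro x hx
    simp only [hT, mem_product, mem_powersetCard] at hx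
    exact ⟨hx.1, hx.2.1, hx.2.2.1, hx.2.2.2⟩
  have hint : ∀ x ∈ T, (f x) ∩ A = {x.1} ∧ (f x) ∩ B = {x.2.1} ∧ (f x) ∩ C = x.2.2 ∧
      (f x).card = 4 := by
    rintro ⟨a, b, P⟩ hx
    obtain ⟨ha, hb, hPC, hP2⟩ := hmemT _ hx
    have hbA : b ∉ A := disjoint_right.mp hAB hb
    have haB : a ∉ B := disjoint_left.mp hAB ha
    have haC : a ∉ C := disjoint_left.mp hAC ha
    have hbC : b ∉ C := disjoint_left.mp hBC hb
    have hPA : ∀ y ∈ P, y ∉ A := fun y hy => disjoint_right.mp hAC (hPC hy)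
    have hPB : ∀ y ∈ P, y ∉ B := fun y hy => disjoint_right.mp hBC (hPC hy)
    have haP : a ∉ P := fun h => haC (hPC h)
    have hbP : b ∉ P := fun h => hbC (hPC h)
    have hab : a ≠ b := fun h => haB (h ▸ hb)
    refine ⟨?_, ?_, ?_, ?_⟩
    · ext y
      simp only [hf, mem_inter, mem_insert, mem_singleton]
      constructor
      · rintro ⟨y1 | y1 | y1, y2⟩
        · exact y1
        · exact absurd (y1 ▸ y2) hbA
        · exact absurd y2 (hPA y y1)
      · rintro rfl; exact ⟨Or.inl rfl, ha⟩
    · ext y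
      simp only [hf, mem_inter, mem_insert, mem_singleton]
      constructor
      · rintro ⟨y1 | y1 | y1, y2⟩
        · exact absurd (y1 ▸ y2) haB
        · exact y1
        · exact absurd y2 (hPB y y1)
      · rintro rfl; exact ⟨Or.inr (Or.inl rfl), hb⟩
    · ext y
      simp only [hf, mem_inter, mem_insert]
      constructor
      · rintro ⟨y1 | y1 | y1, y2⟩
        · exact absurd (y1 ▸ y2) haC
        · exact absurd (y1 ▸ y2) hbC
        · exact y1
      · intro hy; exact ⟨Or.inr (Or.inr hy), hPC hy⟩
    · rw [hf]
      rw [card_insert_of_notMem (by simp [hab, haP]), card_insert_of_notMem hbP, hP2]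
  have himg : ((Finset.univ.powersetCard 4).filter
      (fun S => (S ∩ A).card = 1 ∧ (S ∩ B).card = 1 ∧ (S ∩ C).card = 2)) = T.image f := by
    ext S
    simp only [mem_filter, mem_powersetCard, mem_image]
    constructor
    · rintro ⟨⟨-, h4⟩, h1, h2, h3⟩
      obtain ⟨a, ha⟩ := card_eq_one.mp h1
      obtain ⟨b, hb⟩ := card_eq_one.mp h2
      have haS : a ∈ S ∧ a ∈ A := mem_inter.mp (ha ▸ mem_singleton_self a)
      have hbS : b ∈ S ∧ b ∈ B := mem_inter.mp (hb ▸ mem_singleton_self b)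
      have hxT : (a, b, S ∩ C) ∈ T := by
        simp only [hT, mem_product, mem_powersetCard]
        exact ⟨haS.2, hbS.2, inter_subset_right, h3⟩
      refine ⟨(a, b, S ∩ C), hxT, ?_⟩
      -- show f x = S
      have hdisj1 : Disjoint (S ∩ A) (S ∩ B) :=
        hAB.mono inter_subset_right inter_subset_right
      have hdisj2 : Disjoint ((S ∩ A) ∪ (S ∩ B)) (S ∩ C) :=
        disjoint_union_left.mpr ⟨hAC.mono inter_subset_right inter_subset_right,
          hBC.mono inter_subset_right inter_subset_right⟩
      have hcup : ((S ∩ A) ∪ (S ∩ B)) ∪ (S ∩ C) = S := by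
        apply eq_of_subset_of_card_le
        · exact union_subset (union_subset inter_subset_left inter_subset_left)
            inter_subset_left
        · rw [card_union_of_disjoint hdisj2, card_union_of_disjoint hdisj1, h1, h2, h3, h4]
      rw [hf]
      ext y
      simp only [mem_insert, mem_inter]
      constructor
      · rintro (rfl | rfl | hy)
        · exact haS.1
        · exact hbS.1
        · exact hy.1
      · intro hyS
        have hy2 : y ∈ S ∩ A ∪ S ∩ B ∪ S ∩ C := hcup.symm ▸ hyS
        simp only [ha, hb, mem_union, mem_singleton, mem_inter] at hy2
        tauto
    · rintro ⟨x, hx, rfl⟩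
      obtain ⟨e1, e2, e3, e4⟩ := hint x hx
      exact ⟨⟨subset_univ _, e4⟩, by rw [e1, card_singleton], by rw [e2, card_singleton],
        by rw [e3]; exact (hmemT x hx).2.2.2⟩
  have hinj : Set.InjOn f T := by
    intro x hx y hy hxy
    obtain ⟨ex1, ex2, ex3, -⟩ := hint x (by simpa using hx)
    obtain ⟨ey1, ey2, ey3, -⟩ := hint y (by simpa using hy)
    have h1 : x.1 = y.1 := singleton_injective (by rw [← ex1, ← ey1, hxy])
    have h2 : x.2.1 = y.2.1 := singleton_injective (by rw [← ex2, ← ey2, hxy])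
    have h3 : x.2.2 = y.2.2 := by rw [← ex3, ← ey3, hxy]
    exact Prod.ext h1 (Prod.ext h2 h3)
  rw [himg, card_image_of_injOn hinj, hT, card_product, card_product, card_powersetCard,
    mul_assoc]

theorem stmt_9 (n m : ℕ) (hn3 : n % 3 = 0) (hm : 3 * m ≤ n)
    (V1 V2 : Fin 3 → Finset (Fin n))
    (hV1 : ∀ j, (V1 j).card = m) (hV2 : ∀ j, (V2 j).card = n / 3 - m)
    (hdisj : ∀ j, Disjoint (V1 j) (V2 j))
    (hdisj2 : ∀ j j' : Fin 3, j ≠ j' → Disjoint (V1 j ∪ V2 j) (V1 j' ∪ V2 j'))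
    (hcover : (V1 0 ∪ V2 0) ∪ (V1 1 ∪ V2 1) ∪ (V1 2 ∪ V2 2) = Finset.univ)
    (G : Finset (Finset (Fin n)))
    (hG : ∀ E : Finset (Fin n), E ∈ G ↔ (E.card = 3 ∧ ∃ j : Fin 3,
      (E ⊆ V1 j ∨ E ⊆ V2 j) ∨
      ((E ∩ V1 j).card = 2 ∧ (E ∩ V2 j).card = 1) ∨
      ((E ∩ V1 j).card = 2 ∧ (E ∩ (V1 (j + 1) ∪ V2 (j + 1))).card = 1) ∨
      ((E ∩ V2 j).card = 2 ∧ (E ∩ V1 (j + 1)).card = 1) ∨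
      ((E ∩ V2 j).card = 2 ∧ (E ∩ (V1 (j - 1) ∪ V2 (j - 1))).card = 1) ∨
      ((E ∩ V1 j).card = 1 ∧ (E ∩ V2 j).card = 1 ∧
        (E ∩ (V1 (j + 1) ∪ V2 (j + 1))).card = 1))) :
    6 * ((Finset.univ.powersetCard 4).filter
        (fun S : Finset (Fin n) => ((S.powersetCard 3).filter (· ∈ G)).card = 3)).card
      = m ^ 2 * (n - 3 * m) * (n - 3 * m - 3) := by
  have dV1V1 : ∀ j j' : Fin 3, j ≠ j' → Disjoint (V1 j) (V1 j') := fun j j' h =>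
    (hdisj2 j j' h).mono subset_union_left subset_union_left
  have dV1V2 : ∀ j j' : Fin 3, j ≠ j' → Disjoint (V1 j) (V2 j') := fun j j' h =>
    (hdisj2 j j' h).mono subset_union_left subset_union_right
  have dV2V1 : ∀ j j' : Fin 3, j ≠ j' → Disjoint (V2 j) (V1 j') := fun j j' h =>
    (hdisj2 j j' h).mono subset_union_right subset_union_left
  have dV2V2 : ∀ j j' : Fin 3, j ≠ j' → Disjoint (V2 j) (V2 j') := fun j j' h =>
    (hdisj2 j j' h).mono subset_union_right subset_union_right
  have hE : ∀ E : Finset (Fin n), E ∈ G ↔ (E.card = 3 ∧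
      edgeP (E ∩ V1 0).card (E ∩ V2 0).card (E ∩ V1 1).card (E ∩ V2 1).card
        (E ∩ V1 2).card (E ∩ V2 2).card) := by
    intro E
    rw [hG]
    refine and_congr_right fun h3 => ?_
    have hu : ∀ k : Fin 3, (E ∩ (V1 k ∪ V2 k)).card = (E ∩ V1 k).card + (E ∩ V2 k).card :=
      fun k => by
        rw [inter_union_distrib_left,
          card_union_of_disjoint ((hdisj k).mono inter_subset_right inter_subset_right)]
    have hs1 : ∀ k : Fin 3, E ⊆ V1 k ↔ (E ∩ V1 k).card = 3 := fun k => by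
      constructor
      · intro h; rw [inter_eq_left.mpr h, h3]
      · intro h
        exact inter_eq_left.mp (eq_of_subset_of_card_le inter_subset_left (by omega))
    have hs2 : ∀ k : Fin 3, E ⊆ V2 k ↔ (E ∩ V2 k).card = 3 := fun k => by
      constructor
      · intro h; rw [inter_eq_left.mpr h, h3]
      · intro h
        exact inter_eq_left.mp (eq_of_subset_of_card_le inter_subset_left (by omega))
    simp only [hs1, hs2, hu]
    unfold edgeP
    constructor
    · rintro ⟨j, h⟩
      fin_cases j
      · exact Or.inl h
      · exact Or.inr (Or.inl h)
      · exact Or.inr (Or.inr h)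
    · rintro (h | h | h)
      exacts [⟨0, h⟩, ⟨1, h⟩, ⟨2, h⟩]
  have key : ∀ S : Finset (Fin n), S.card = 4 →
      (((S.powersetCard 3).filter (· ∈ G)).card = 3 ↔
        ∃ j : Fin 3, (S ∩ V1 j).card = 1 ∧ (S ∩ V1 (j + 1)).card = 1 ∧
          (S ∩ V2 j).card = 2) := by
    intro S h4
    have dSS : ∀ {X Y : Finset (Fin n)}, Disjoint X Y → Disjoint (S ∩ X) (S ∩ Y) :=
      fun h => h.mono inter_subset_right inter_subset_right
    have dpair : ∀ j j' : Fin 3, j ≠ j' →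
        Disjoint (S ∩ V1 j ∪ S ∩ V2 j) (S ∩ V1 j' ∪ S ∩ V2 j') := fun j j' h =>
      disjoint_union_left.mpr ⟨disjoint_union_right.mpr ⟨dSS (dV1V1 j j' h), dSS (dV1V2 j j' h)⟩,
        disjoint_union_right.mpr ⟨dSS (dV2V1 j j' h), dSS (dV2V2 j j' h)⟩⟩
    have hSsplit : S = ((S ∩ V1 0 ∪ S ∩ V2 0) ∪ (S ∩ V1 1 ∪ S ∩ V2 1)) ∪
        (S ∩ V1 2 ∪ S ∩ V2 2) := by
      conv_lhs => rw [← inter_univ S, ← hcover]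
      simp only [inter_union_distrib_left]
    have hsplit_sum : ∀ g : Fin n → ℕ, ∑ v ∈ S, g v =
        ((∑ v ∈ S ∩ V1 0, g v + ∑ v ∈ S ∩ V2 0, g v) +
         (∑ v ∈ S ∩ V1 1, g v + ∑ v ∈ S ∩ V2 1, g v)) +
        (∑ v ∈ S ∩ V1 2, g v + ∑ v ∈ S ∩ V2 2, g v) := by
      intro g
      conv_lhs => rw [hSsplit]
      rw [sum_union (disjoint_union_left.mpr ⟨dpair 0 2 (by decide), dpair 1 2 (by decide)⟩),
        sum_union (dpair 0 1 (by decide)), sum_union (dSS (hdisj 0)),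
        sum_union (dSS (hdisj 1)), sum_union (dSS (hdisj 2))]
    have hc4 : (S ∩ V1 0).card + (S ∩ V2 0).card + (S ∩ V1 1).card + (S ∩ V2 1).card +
        (S ∩ V1 2).card + (S ∩ V2 2).card = 4 := by
      have h := hsplit_sum (fun _ => 1)
      simp only [sum_const, smul_eq_mul, mul_one] at h
      omega
    have hv10 : ∀ v ∈ S ∩ V1 0, (if S.erase v ∈ G then (1:ℕ) else 0) =
        (if edgeP ((S ∩ V1 0).card - 1) (S ∩ V2 0).card (S ∩ V1 1).card (S ∩ V2 1).card
          (S ∩ V1 2).card (S ∩ V2 2).card then 1 else 0) := by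
      intro v hv
      obtain ⟨hvS, hvA⟩ := mem_inter.mp hv
      refine if_congr ?_ rfl rfl
      rw [hE, card_erase_inter_mem hvS hvA,
        card_erase_inter_not S (disjoint_left.mp (hdisj 0) hvA),
        card_erase_inter_not S (disjoint_left.mp (dV1V1 0 1 (by decide)) hvA),
        card_erase_inter_not S (disjoint_left.mp (dV1V2 0 1 (by decide)) hvA),
        card_erase_inter_not S (disjoint_left.mp (dV1V1 0 2 (by decide)) hvA),
        card_erase_inter_not S (disjoint_left.mp (dV1V2 0 2 (by decide)) hvA),
        card_erase_of_mem hvS, h4]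
      simp
    have hv20 : ∀ v ∈ S ∩ V2 0, (if S.erase v ∈ G then (1:ℕ) else 0) =
        (if edgeP (S ∩ V1 0).card ((S ∩ V2 0).card - 1) (S ∩ V1 1).card (S ∩ V2 1).card
          (S ∩ V1 2).card (S ∩ V2 2).card then 1 else 0) := by
      intro v hv
      obtain ⟨hvS, hvA⟩ := mem_inter.mp hv
      refine if_congr ?_ rfl rfl
      rw [hE, card_erase_inter_mem hvS hvA,
        card_erase_inter_not S (disjoint_right.mp (hdisj 0) hvA),
        card_erase_inter_not S (disjoint_left.mp (dV2V1 0 1 (by decide)) hvA),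
        card_erase_inter_not S (disjoint_left.mp (dV2V2 0 1 (by decide)) hvA),
        card_erase_inter_not S (disjoint_left.mp (dV2V1 0 2 (by decide)) hvA),
        card_erase_inter_not S (disjoint_left.mp (dV2V2 0 2 (by decide)) hvA),
        card_erase_of_mem hvS, h4]
      simp
    have hv11 : ∀ v ∈ S ∩ V1 1, (if S.erase v ∈ G then (1:ℕ) else 0) =
        (if edgeP (S ∩ V1 0).card (S ∩ V2 0).card ((S ∩ V1 1).card - 1) (S ∩ V2 1).card
          (S ∩ V1 2).card (S ∩ V2 2).card then 1 else 0) := by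
      intro v hv
      obtain ⟨hvS, hvA⟩ := mem_inter.mp hv
      refine if_congr ?_ rfl rfl
      rw [hE, card_erase_inter_mem hvS hvA,
        card_erase_inter_not S (disjoint_right.mp (dV1V1 0 1 (by decide)) hvA),
        card_erase_inter_not S (disjoint_right.mp (dV2V1 0 1 (by decide)) hvA),
        card_erase_inter_not S (disjoint_left.mp (hdisj 1) hvA),
        card_erase_inter_not S (disjoint_left.mp (dV1V1 1 2 (by decide)) hvA),
        card_erase_inter_not S (disjoint_left.mp (dV1V2 1 2 (by decide)) hvA),
        card_erase_of_mem hvS, h4]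
      simp
    have hv21 : ∀ v ∈ S ∩ V2 1, (if S.erase v ∈ G then (1:ℕ) else 0) =
        (if edgeP (S ∩ V1 0).card (S ∩ V2 0).card (S ∩ V1 1).card ((S ∩ V2 1).card - 1)
          (S ∩ V1 2).card (S ∩ V2 2).card then 1 else 0) := by
      intro v hv
      obtain ⟨hvS, hvA⟩ := mem_inter.mp hv
      refine if_congr ?_ rfl rfl
      rw [hE, card_erase_inter_mem hvS hvA,
        card_erase_inter_not S (disjoint_right.mp (dV1V2 0 1 (by decide)) hvA),
        card_erase_inter_not S (disjoint_right.mp (dV2V2 0 1 (by decide)) hvA),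
        card_erase_inter_not S (disjoint_right.mp (hdisj 1) hvA),
        card_erase_inter_not S (disjoint_left.mp (dV2V1 1 2 (by decide)) hvA),
        card_erase_inter_not S (disjoint_left.mp (dV2V2 1 2 (by decide)) hvA),
        card_erase_of_mem hvS, h4]
      simp
    have hv12 : ∀ v ∈ S ∩ V1 2, (if S.erase v ∈ G then (1:ℕ) else 0) =
        (if edgeP (S ∩ V1 0).card (S ∩ V2 0).card (S ∩ V1 1).card (S ∩ V2 1).card
          ((S ∩ V1 2).card - 1) (S ∩ V2 2).card then 1 else 0) := by
      intro v hv
      obtain ⟨hvS, hvA⟩ := mem_inter.mp hv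
      refine if_congr ?_ rfl rfl
      rw [hE, card_erase_inter_mem hvS hvA,
        card_erase_inter_not S (disjoint_right.mp (dV1V1 0 2 (by decide)) hvA),
        card_erase_inter_not S (disjoint_right.mp (dV2V1 0 2 (by decide)) hvA),
        card_erase_inter_not S (disjoint_right.mp (dV1V1 1 2 (by decide)) hvA),
        card_erase_inter_not S (disjoint_right.mp (dV2V1 1 2 (by decide)) hvA),
        card_erase_inter_not S (disjoint_left.mp (hdisj 2) hvA),
        card_erase_of_mem hvS, h4]
      simp
    have hv22 : ∀ v ∈ S ∩ V2 2, (if S.erase v ∈ G then (1:ℕ) else 0) =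
        (if edgeP (S ∩ V1 0).card (S ∩ V2 0).card (S ∩ V1 1).card (S ∩ V2 1).card
          (S ∩ V1 2).card ((S ∩ V2 2).card - 1) then 1 else 0) := by
      intro v hv
      obtain ⟨hvS, hvA⟩ := mem_inter.mp hv
      refine if_congr ?_ rfl rfl
      rw [hE, card_erase_inter_mem hvS hvA,
        card_erase_inter_not S (disjoint_right.mp (dV1V2 0 2 (by decide)) hvA),
        card_erase_inter_not S (disjoint_right.mp (dV2V2 0 2 (by decide)) hvA),
        card_erase_inter_not S (disjoint_right.mp (dV1V2 1 2 (by decide)) hvA),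
        card_erase_inter_not S (disjoint_right.mp (dV2V2 1 2 (by decide)) hvA),
        card_erase_inter_not S (disjoint_right.mp (hdisj 2) hvA),
        card_erase_of_mem hvS, h4]
      simp
    have hinjS : Set.InjOn S.erase S := by
      intro a ha b hb h
      by_contra hne
      have h1 : a ∈ S.erase b := mem_erase.mpr ⟨hne, mem_coe.mp ha⟩
      rw [← h] at h1
      exact (mem_erase.mp h1).1 rfl
    have hcnt : ((S.powersetCard 3).filter (· ∈ G)).card =
        fP (S ∩ V1 0).card (S ∩ V2 0).card (S ∩ V1 1).card (S ∩ V2 1).card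
          (S ∩ V1 2).card (S ∩ V2 2).card := by
      rw [powersetCard_three S h4, filter_image,
        card_image_of_injOn (hinjS.mono (by simp only [coe_subset]; exact filter_subset _ _)),
        card_eq_sum_ones, sum_filter, hsplit_sum, sum_congr rfl hv10, sum_congr rfl hv20,
        sum_congr rfl hv11, sum_congr rfl hv21, sum_congr rfl hv12, sum_congr rfl hv22]
      simp only [sum_const, smul_eq_mul]
      unfold fP
      ring
    rw [hcnt, keyP _ _ _ _ _ _ (by omega)]
    unfold goodP
    constructor
    · rintro (h | h | h)
      · exact ⟨0, h.1, h.2.1, h.2.2⟩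
      · exact ⟨1, h.1, h.2.1, h.2.2⟩
      · exact ⟨2, h.1, h.2.1, h.2.2⟩
    · rintro ⟨j, h1, h2, h3⟩
      fin_cases j
      · exact Or.inl ⟨h1, h2, h3⟩
      · exact Or.inr (Or.inl ⟨h1, h2, h3⟩)
      · exact Or.inr (Or.inr ⟨h1, h2, h3⟩)
  have hne01 : ∀ j : Fin 3, j ≠ j + 1 := by decide
  have hbi : (Finset.univ.powersetCard 4).filter
      (fun S : Finset (Fin n) => ((S.powersetCard 3).filter (· ∈ G)).card = 3)
      = (Finset.univ : Finset (Fin 3)).biUnion (fun j => (Finset.univ.powersetCard 4).filter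
          (fun S : Finset (Fin n) => (S ∩ V1 j).card = 1 ∧ (S ∩ V1 (j + 1)).card = 1 ∧
            (S ∩ V2 j).card = 2)) := by
    ext S
    simp only [mem_filter, mem_biUnion, mem_univ, true_and, mem_powersetCard]
    constructor
    · rintro ⟨⟨hsub, h4⟩, h3⟩
      obtain ⟨j, hj⟩ := (key S h4).mp h3
      exact ⟨j, ⟨hsub, h4⟩, hj⟩
    · rintro ⟨j, ⟨hsub, h4⟩, hj⟩
      exact ⟨⟨hsub, h4⟩, (key S h4).mpr ⟨j, hj⟩⟩
  have hdisjA : ∀ j ∈ (Finset.univ : Finset (Fin 3)), ∀ j' ∈ (Finset.univ : Finset (Fin 3)),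
      j ≠ j' → Disjoint
        ((Finset.univ.powersetCard 4).filter
          (fun S : Finset (Fin n) => (S ∩ V1 j).card = 1 ∧ (S ∩ V1 (j + 1)).card = 1 ∧
            (S ∩ V2 j).card = 2))
        ((Finset.univ.powersetCard 4).filter
          (fun S : Finset (Fin n) => (S ∩ V1 j').card = 1 ∧ (S ∩ V1 (j' + 1)).card = 1 ∧
            (S ∩ V2 j').card = 2)) := by
    intro j _ j' _ hjj'
    rw [disjoint_left]
    intro S hSj hSj'
    simp only [mem_filter, mem_powersetCard] at hSj hSj'
    obtain ⟨⟨-, h4⟩, a1, -, a3⟩ := hSj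
    obtain ⟨⟨-, -⟩, -, -, b3⟩ := hSj'
    have hd : Disjoint (S ∩ V2 j) (S ∩ V2 j') :=
      (dV2V2 j j' hjj').mono inter_subset_right inter_subset_right
    have hsub : (S ∩ V2 j) ∪ (S ∩ V2 j') ⊆ S :=
      union_subset inter_subset_left inter_subset_left
    have hcup : (S ∩ V2 j) ∪ (S ∩ V2 j') = S :=
      eq_of_subset_of_card_le hsub (by rw [card_union_of_disjoint hd, a3, b3, h4])
    have hempty : S ∩ V1 j = ∅ := by
      rw [eq_empty_iff_forall_notMem]
      intro v hv
      obtain ⟨hvS, hvV⟩ := mem_inter.mp hv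
      have hv2 : v ∈ (S ∩ V2 j) ∪ (S ∩ V2 j') := hcup.symm ▸ hvS
      rcases mem_union.mp hv2 with h | h
      · exact disjoint_left.mp (hdisj j) hvV (mem_inter.mp h).2
      · exact disjoint_left.mp (dV1V2 j j' hjj') hvV (mem_inter.mp h).2
    rw [hempty] at a1
    simp at a1
  rw [hbi, card_biUnion hdisjA]
  have hAcard : ∀ j ∈ (Finset.univ : Finset (Fin 3)),
      ((Finset.univ.powersetCard 4).filter
        (fun S : Finset (Fin n) => (S ∩ V1 j).card = 1 ∧ (S ∩ V1 (j + 1)).card = 1 ∧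
          (S ∩ V2 j).card = 2)).card = m * m * ((n / 3 - m).choose 2) := by
    intro j _
    rw [card_slice (V1 j) (V1 (j + 1)) (V2 j) (dV1V1 j (j + 1) (hne01 j)) (hdisj j)
      (dV1V2 (j + 1) j (fun h => hne01 j h.symm)), hV1, hV1, hV2]
  rw [sum_congr rfl hAcard, sum_const, card_univ, Fintype.card_fin, smul_eq_mul]
  -- arithmetic
  by_cases hc : n / 3 ≤ m
  · have e0 : n / 3 - m = 0 := by omega
    have e1 : n - 3 * m = 0 := by omega
    rw [e0, e1]
    simp
  · have e1 : n - 3 * m = 3 * (n / 3 - m) := by omega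
    have e2 : n - 3 * m - 3 = 3 * (n / 3 - m - 1) := by omega
    have h2C := two_choose_two (n / 3 - m)
    rw [e2, e1]
    calc 6 * (3 * (m * m * ((n / 3 - m).choose 2)))
        = 9 * (m * m * (2 * (n / 3 - m).choose 2)) := by ring
      _ = 9 * (m * m * ((n / 3 - m) * (n / 3 - m - 1))) := by rw [h2C]
      _ = m ^ 2 * (3 * (n / 3 - m)) * (3 * (n / 3 - m - 1)) := by ring
end

section
/- Let H be a 3-graph on n vertices that is a subgraph of a blowup of G_6^2 (the 3-graph on 6 vertices whose complement is {123,126,345,456}). Then |H| <= 2n^3/27. -/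
lemma G62_eq : G62 = {{2,4,5},{2,3,5},{1,4,5},{1,3,5},{1,3,4},{1,2,5},{1,2,4},{1,2,3},
    {0,4,5},{0,3,5},{0,3,4},{0,2,5},{0,2,4},{0,2,3},{0,1,4},{0,1,3}} := by decide

lemma sum_G62_le (x : Fin 6 → ℝ) (hx : ∀ i, 0 ≤ x i) :
    ∑ T ∈ G62, ∏ i ∈ T, x i ≤ 2 * (∑ i, x i) ^ 3 / 27 := by
  have hsum : ∑ T ∈ G62, ∏ i ∈ T, x i =
      x 2*x 4*x 5 + x 2*x 3*x 5 + x 1*x 4*x 5 + x 1*x 3*x 5 + x 1*x 3*x 4 + x 1*x 2*x 5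
    + x 1*x 2*x 4 + x 1*x 2*x 3 + x 0*x 4*x 5 + x 0*x 3*x 5 + x 0*x 3*x 4 + x 0*x 2*x 5
    + x 0*x 2*x 4 + x 0*x 2*x 3 + x 0*x 1*x 4 + x 0*x 1*x 3 := by
    rw [G62_eq]
    simp (config := { decide := true }) only [Finset.sum_insert, Finset.sum_singleton,
      Finset.prod_insert, Finset.prod_singleton, Finset.mem_insert, Finset.mem_singleton]
    ring
  rw [hsum, Fin.sum_univ_six]
  set a := x 0; set b := x 1; set c := x 2; set d := x 3; set e := x 4; set g := x 5
  have ha := hx 0; have hb := hx 1; have hc := hx 2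
  have hd := hx 3; have he := hx 4; have hg := hx 5
  have h1 : 0 ≤ (a-b)^2 * (d+e) := by positivity
  have h2 : 0 ≤ (d-e)^2 * (a+b) := by positivity
  have h3 : 0 ≤ (c-g)^2 * (a+b+d+e) := by positivity
  have h4 : 0 ≤ ((a+b)-(d+e))^2 * ((a+b+d+e) + 4*(c+g)) := by positivity
  have h5 : 0 ≤ ((a+b+d+e) - 2*(c+g))^2 * (5*(a+b+d+e) + 8*(c+g)) := by positivity
  nlinarith [h1, h2, h3, h4, h5]

lemma fiber_bound {V : Type*} [DecidableEq V] [Fintype V] (f : V → Fin 6) (T : Finset (Fin 6))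
    (S : Finset (Finset V))
    (hS : ∀ E ∈ S, E.image f = T ∧ Set.InjOn f (E : Set V)) :
    S.card ≤ ∏ i ∈ T, (Finset.univ.filter (fun v => f v = i)).card := by
  classical
  rcases S.eq_empty_or_nonempty with h | ⟨E0, hE0⟩
  · simp [h]
  rcases T.eq_empty_or_nonempty with hT | ⟨i0, hi0⟩
  · subst hT
    have hsub : S ⊆ {∅} := by
      intro E hE
      have h1 := (hS E hE).1
      rw [Finset.image_eq_empty] at h1
      simp [h1]
    simpa using Finset.card_le_card hsub
  · haveI : Nonempty V := by
      have h1 := (hS E0 hE0).1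
      have : i0 ∈ E0.image f := h1 ▸ hi0
      obtain ⟨x, _, _⟩ := Finset.mem_image.mp this
      exact ⟨x⟩
    rw [← Finset.card_pi]
    set g : Finset V → (∀ i ∈ T, V) :=
      fun E i _ => if h : ∃ x ∈ E, f x = i then h.choose else Classical.arbitrary V with hg
    have gspec : ∀ E ∈ S, ∀ x ∈ E, ∀ h : f x ∈ T, g E (f x) h = x := by
      intro E hE x hx h
      obtain ⟨_, hinj⟩ := hS E hE
      have hex : ∃ y ∈ E, f y = f x := ⟨x, hx, rfl⟩
      simp only [hg, dif_pos hex]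
      obtain ⟨hy, hfy⟩ := hex.choose_spec
      exact hinj hy hx hfy
    apply Finset.card_le_card_of_injOn g
    · intro E hE
      rw [Finset.mem_coe, Finset.mem_pi]
      intro i hi
      obtain ⟨himg, _⟩ := hS E hE
      have hex : ∃ x ∈ E, f x = i := by
        have : i ∈ E.image f := himg ▸ hi
        simpa [Finset.mem_image] using this
      simp only [hg, dif_pos hex]
      obtain ⟨_, hfi⟩ := hex.choose_spec
      simp [Finset.mem_filter, hfi]
    · intro E1 h1 E2 h2 heq
      have key : ∀ E ∈ S, ∀ E' ∈ S, g E = g E' → E ⊆ E' := by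
        intro E hE E' hE' he x hx
        have hfx : f x ∈ T := (hS E hE).1 ▸ Finset.mem_image_of_mem f hx
        have e1 := gspec E hE x hx hfx
        have e2 := congrFun (congrFun he (f x)) hfx
        rw [e1] at e2
        have hex2 : ∃ y ∈ E', f y = f x := by
          have : f x ∈ E'.image f := (hS E' hE').1 ▸ hfx
          simpa [Finset.mem_image] using this
        rw [hg] at e2
        simp only [dif_pos hex2] at e2
        rw [e2]
        exact hex2.choose_spec.1
      exact Finset.Subset.antisymm (key E1 h1 E2 h2 heq) (key E2 h2 E1 h1 heq.symm)

theorem stmt_13 {V : Type*} [Fintype V] [DecidableEq V] (n : ℕ) (hn : n = Fintype.card V)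
    (H : Finset (Finset V)) (f : V → Fin 6)
    (hH : ∀ E ∈ H, E.card = 3 ∧ (E.image f).card = 3 ∧ E.image f ∈ G62) :
    (H.card : ℝ) ≤ 2 * (n : ℝ) ^ 3 / 27 := by
  classical
  set N : Fin 6 → ℕ := fun i => (Finset.univ.filter (fun v => f v = i)).card with hN
  have hsumN : ∑ i, N i = n := by
    rw [hn, ← Finset.card_univ,
      Finset.card_eq_sum_card_fiberwise (f := f) (t := Finset.univ)
        (fun x _ => Finset.mem_univ _)]
  have hcount : H.card ≤ ∑ T ∈ G62, ∏ i ∈ T, N i := by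
    rw [Finset.card_eq_sum_card_fiberwise (f := fun E => E.image f) (t := G62)
      (fun E hE => (hH E hE).2.2)]
    apply Finset.sum_le_sum
    intro T hT
    apply fiber_bound f T
    intro E hE
    rw [Finset.mem_filter] at hE
    refine ⟨hE.2, ?_⟩
    have h3 := hH E hE.1
    have : (E.image f).card = E.card := by rw [h3.2.1, h3.1]
    exact Finset.card_image_iff.mp this
  have hx : ∀ i, (0 : ℝ) ≤ (N i : ℝ) := fun i => Nat.cast_nonneg _
  calc (H.card : ℝ) ≤ ∑ T ∈ G62, ∏ i ∈ T, (N i : ℝ) := by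
        exact_mod_cast hcount
    _ ≤ 2 * (∑ i, (N i : ℝ)) ^ 3 / 27 := sum_G62_le _ hx
    _ = 2 * (n : ℝ) ^ 3 / 27 := by rw [← hsumN]; push_cast; ring
end

section
/- If a 3-graph H on n vertices is semibipartite with parts A, B (every edge has one vertex in A and two in B) and |H| >= (4/9 - 10*eps^{1/2}) * binom(n,3) for sufficiently small eps > 0 and sufficiently large n, then (2/3 - 4*eps^{1/4}) * n < |B| < (2/3 + 4*eps^{1/4}) * n. -/
lemma cast_choose_three (n : ℕ) (hn : 3 ≤ n) :
    (n.choose 3 : ℝ) = n * (n - 1) * (n - 2) / 6 := by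
  have h : Nat.factorial 3 * n.choose 3 = n.descFactorial 3 :=
    (Nat.descFactorial_eq_factorial_mul_choose n 3).symm
  have h2 : n.descFactorial 3 = (n - 2) * ((n - 1) * n) := by
    simp [Nat.descFactorial_succ, Nat.descFactorial_zero]
  rw [h2] at h
  have h1n : (1:ℕ) ≤ n := by omega
  have h2n : (2:ℕ) ≤ n := by omega
  have hc : ((Nat.factorial 3 * n.choose 3 : ℕ) : ℝ) = (((n - 2) * ((n - 1) * n) : ℕ) : ℝ) := by
    rw [h]
  push_cast [Nat.cast_sub h1n, Nat.cast_sub h2n] at hc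
  have h6 : ((Nat.factorial 3 : ℕ) : ℝ) = 6 := by norm_num [Nat.factorial]
  rw [h6] at hc
  linarith

lemma count_lemma {n : ℕ} (A B : Finset (Fin n)) (H : Finset (Finset (Fin n)))
    (hUnion : A ∪ B = Finset.univ)
    (hH : ∀ E ∈ H, E.card = 3 ∧ (E ∩ A).card = 1 ∧ (E ∩ B).card = 2) :
    H.card ≤ A.card * (B.card.choose 2) := by
  classical
  have hle : H.card ≤ ((A.powersetCard 1) ×ˢ (B.powersetCard 2)).card := by
    apply Finset.card_le_card_of_injOn (fun E => (E ∩ A, E ∩ B))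
    · intro E hE
      obtain ⟨_, h1, h2⟩ := hH E hE
      simp only [Finset.mem_coe, Finset.mem_product, Finset.mem_powersetCard]
      exact ⟨⟨Finset.inter_subset_right, h1⟩, Finset.inter_subset_right, h2⟩
    · intro E hE F hF hEF
      have hE' : E = (E ∩ A) ∪ (E ∩ B) := by
        rw [← Finset.inter_union_distrib_left, hUnion, Finset.inter_univ]
      have hF' : F = (F ∩ A) ∪ (F ∩ B) := by
        rw [← Finset.inter_union_distrib_left, hUnion, Finset.inter_univ]
      simp only [Prod.mk.injEq] at hEF
      rw [hE', hF', hEF.1, hEF.2]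
  simpa [Finset.card_powersetCard, Nat.choose_one_right] using hle

theorem stmt_14 : ∃ ε₀ : ℝ, 0 < ε₀ ∧ ∀ ε : ℝ, 0 < ε → ε < ε₀ →
    ∃ N : ℕ, ∀ n : ℕ, N ≤ n →
    ∀ (A B : Finset (Fin n)) (H : Finset (Finset (Fin n))),
      Disjoint A B → A ∪ B = Finset.univ →
      (∀ E ∈ H, E.card = 3 ∧ (E ∩ A).card = 1 ∧ (E ∩ B).card = 2) →
      (4 / 9 - 10 * Real.sqrt ε) * (n.choose 3 : ℝ) ≤ (H.card : ℝ) →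
      (2 / 3 - 4 * Real.sqrt (Real.sqrt ε)) * (n : ℝ) < (B.card : ℝ) ∧
      (B.card : ℝ) < (2 / 3 + 4 * Real.sqrt (Real.sqrt ε)) * (n : ℝ) := by
  use 1/10000
  refine ⟨by norm_num, ?_⟩
  intro ε hε hε'
  have hs0 : 0 < Real.sqrt ε := Real.sqrt_pos.2 hε
  set s := Real.sqrt ε with hs_def
  have hsq : s^2 = ε := Real.sq_sqrt hε.le
  have hs_small : s < 1/100 := by nlinarith [hs0, hε', hsq]
  have hr0 : 0 < Real.sqrt s := Real.sqrt_pos.2 hs0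
  set r := Real.sqrt s with hr_def
  have hr2 : r ^ 2 = s := Real.sq_sqrt hs0.le
  obtain ⟨N, hN⟩ := exists_nat_gt (3 / s)
  use max N 3
  intro n hn A B H hdisj hunion hedge hcard
  have hn3 : 3 ≤ n := le_trans (le_max_right _ _) hn
  have hnN : (3 / s : ℝ) < n :=
    lt_of_lt_of_le hN (by exact_mod_cast le_trans (le_max_left _ _) hn)
  have hnpos : (0:ℝ) < n := lt_trans (by positivity) hnN
  have hAB : A.card + B.card = n := by
    rw [← Finset.card_union_of_disjoint hdisj, hunion, Finset.card_univ, Fintype.card_fin]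
  have hcount : H.card ≤ A.card * (B.card.choose 2) := count_lemma A B H hunion hedge
  have hb0 : (0:ℝ) ≤ (B.card : ℝ) := Nat.cast_nonneg _
  have hbn : (B.card : ℝ) ≤ (n : ℝ) := by exact_mod_cast (by omega : B.card ≤ n)
  have hA : (A.card : ℝ) = (n : ℝ) - B.card := by
    have h := hAB
    have : (A.card : ℝ) + B.card = n := by exact_mod_cast h
    linarith
  have hchoose2 : ((B.card.choose 2 : ℕ) : ℝ) = (B.card : ℝ) * ((B.card : ℝ) - 1) / 2 :=
    Nat.cast_choose_two (K := ℝ) B.card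
  have hcount' : (H.card : ℝ) ≤ ((n:ℝ) - B.card) * ((B.card:ℝ) * ((B.card:ℝ) - 1) / 2) := by
    calc (H.card : ℝ) ≤ ((A.card * B.card.choose 2 : ℕ) : ℝ) := by exact_mod_cast hcount
    _ = ((n:ℝ) - B.card) * ((B.card:ℝ) * ((B.card:ℝ) - 1) / 2) := by
        push_cast [hchoose2, hA]; ring
  have hch3 : (n.choose 3 : ℝ) = n * ((n:ℝ) - 1) * ((n:ℝ) - 2) / 6 := cast_choose_three n hn3
  rw [hch3] at hcard
  set b : ℝ := (B.card : ℝ)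
  have hcoef : (0:ℝ) < 4/9 - 10 * s := by linarith
  have hns : (3:ℝ) ≤ s * n := by
    rw [div_lt_iff₀ hs0] at hnN
    linarith [hnN]
  have hn1 : (1:ℝ) ≤ (n:ℝ) := by exact_mod_cast (by omega : 1 ≤ n)
  have hsn3 : 3 * (n:ℝ)^2 ≤ s * (n:ℝ)^3 := by
    have h := mul_nonneg (sub_nonneg.2 hns) (sq_nonneg (n:ℝ))
    linarith [h]
  have h3n : (0:ℝ) ≤ 3*(n:ℝ)^2 - 2*(n:ℝ) := by
    have h := mul_le_mul_of_nonneg_left hn1 hnpos.le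
    linarith [h]
  have hx : (0:ℝ) ≤ 10 * s * (3*(n:ℝ)^2 - 2*(n:ℝ)) :=
    mul_nonneg (by positivity) h3n
  have t1 : ((n:ℝ) - b) * (b * (b - 1) / 2) ≤ ((n:ℝ) - b) * b^2 / 2 := by
    have h := mul_nonneg (sub_nonneg.2 hbn) hb0
    linarith [h]
  have hstep : (4/9 - 11 * s) * (n:ℝ)^3 ≤ 3 * ((n:ℝ) - b) * b^2 := by
    linarith [hcard, hcount', t1, hsn3, hx, hnpos.le, sq_nonneg (n:ℝ)]
  have hid : (4:ℝ)/27 * (n:ℝ)^3 - ((n:ℝ) - b) * b^2 = (b - 2*n/3)^2 * (b + n/3) := by ring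
  have e1 : (b - 2*(n:ℝ)/3)^2 * (b + (n:ℝ)/3) ≤ 11*s/3 * (n:ℝ)^3 := by
    rw [← hid]; linarith
  have e2 : (b - 2*(n:ℝ)/3)^2 * ((n:ℝ)/3) ≤ (b - 2*(n:ℝ)/3)^2 * (b + (n:ℝ)/3) :=
    mul_le_mul_of_nonneg_left (by linarith) (sq_nonneg _)
  have e4 : 11*s/3 * (n:ℝ)^3 = (11*s*(n:ℝ)^2) * ((n:ℝ)/3) := by ring
  have e3 : (b - 2*(n:ℝ)/3)^2 * ((n:ℝ)/3) ≤ (11*s*(n:ℝ)^2) * ((n:ℝ)/3) := by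
    rw [← e4]; linarith
  have hkey : (b - 2*(n:ℝ)/3)^2 ≤ 11 * s * (n:ℝ)^2 :=
    le_of_mul_le_mul_right e3 (by positivity)
  have hlt : (b - 2*(n:ℝ)/3)^2 < (4 * r * (n:ℝ))^2 := by
    have h16 : (4 * r * (n:ℝ))^2 = 16 * s * (n:ℝ)^2 := by
      rw [mul_pow, mul_pow, hr2]; ring
    rw [h16]
    have h := mul_pos hs0 (mul_pos hnpos hnpos)
    linarith [hkey, h]
  have habs := abs_lt_of_sq_lt_sq' hlt (by positivity)
  constructor
  · linarith [habs.1]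
  · linarith [habs.2]
end

section
/- Let y1,...,y6 be nonnegative reals summing to 1, and suppose p(y) := y3*y6*(y1+y2+y4+y5) + (y1+y2)*(y3+y6)*(y4+y5) + y1*y2*(y4+y5) + y4*y5*(y1+y2) >= 2/27 - eta for some sufficiently small eta > 0. Then |y_i - 1/6| <= 5*eta^{1/2} for every i in {1,...,6}. -/
theorem Hc000 (a b c : ℝ) (ha : 0 ≤ a) (hb : 0 ≤ b) (hc : 0 ≤ c) :
    0 ≤ 109/1350*(a+b+c)^3 - a*b*c - (a+b+c)*(a^2+b^2+c^2)/25 := by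
  linarith [mul_nonneg ha (sq_nonneg (a-c)), mul_nonneg ha (sq_nonneg (b-c)), mul_nonneg hb (sq_nonneg (a-c)), mul_nonneg hb (sq_nonneg (b-c)), mul_nonneg hc (sq_nonneg (a-c)), mul_nonneg (mul_nonneg ha ha) hb, mul_nonneg (mul_nonneg ha ha) hc, mul_nonneg (mul_nonneg hb hb) ha, mul_nonneg (mul_nonneg hb hb) hc, mul_nonneg (mul_nonneg hc hc) ha]

theorem Hc001 (a b c : ℝ) (ha : 0 ≤ a) (hb : 0 ≤ b) (hc : 0 ≤ c) :
    0 ≤ 109/1350*(a+b+c)^3 - a*b*c - (a+b+c)*(a^2+b^2+c^2)/25 + (2*(a+b+c)/25 - a)*c^2/4 := by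
  linarith [mul_nonneg ha (sq_nonneg (a-b)), mul_nonneg ha (sq_nonneg (a-c)), mul_nonneg ha (sq_nonneg (b-c)), mul_nonneg hb (sq_nonneg (a-b)), mul_nonneg hb (sq_nonneg (a-c)), mul_nonneg hb (sq_nonneg (b-c)), mul_nonneg hc (sq_nonneg (a-c)), mul_nonneg (mul_nonneg ha ha) hc, mul_nonneg (mul_nonneg hb hb) ha, mul_nonneg (mul_nonneg hb hb) hc]

theorem Hc010 (a b c : ℝ) (ha : 0 ≤ a) (hb : 0 ≤ b) (hc : 0 ≤ c) :
    0 ≤ 109/1350*(a+b+c)^3 - a*b*c - (a+b+c)*(a^2+b^2+c^2)/25 + (b - 23*(a+b+c)/25)*b^2/4 := by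
  linarith [mul_nonneg ha (sq_nonneg (a-b)), mul_nonneg ha (sq_nonneg (a-c)), mul_nonneg ha (sq_nonneg (b-c)), mul_nonneg hb (sq_nonneg (a-b)), mul_nonneg hb (sq_nonneg (a-c)), mul_nonneg hb (sq_nonneg (b-c)), mul_nonneg hc (sq_nonneg (a-c)), mul_nonneg (mul_nonneg ha ha) hc, mul_nonneg (mul_nonneg hc hc) ha, mul_nonneg ha (sq_nonneg (c-b/2))]

theorem Hc011 (a b c : ℝ) (ha : 0 ≤ a) (hb : 0 ≤ b) (hc : 0 ≤ c) :
    0 ≤ 109/1350*(a+b+c)^3 - a*b*c - (a+b+c)*(a^2+b^2+c^2)/25 + (b - 23*(a+b+c)/25)*b^2/4 + (2*(a+b+c)/25 - a)*c^2/4 := by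
  linarith [mul_nonneg ha (sq_nonneg (a-b)), mul_nonneg ha (sq_nonneg (a-c)), mul_nonneg ha (sq_nonneg (b-c)), mul_nonneg hb (sq_nonneg (a-b)), mul_nonneg hb (sq_nonneg (a-c)), mul_nonneg hb (sq_nonneg (b-c)), mul_nonneg hc (sq_nonneg (a-c)), mul_nonneg (mul_nonneg ha ha) hc, mul_nonneg (mul_nonneg hc hc) ha, mul_nonneg ha (sq_nonneg (c-b/2))]

theorem Hc100 (a b c : ℝ) (ha : 0 ≤ a) (hb : 0 ≤ b) (hc : 0 ≤ c) :
    0 ≤ 109/1350*(a+b+c)^3 - a*b*c - (a+b+c)*(a^2+b^2+c^2)/25 + (2*(a+b+c)/25 - c)*a^2/4 := by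
  linarith [mul_nonneg ha (sq_nonneg (a-c)), mul_nonneg ha (sq_nonneg (b-c)), mul_nonneg hb (sq_nonneg (a-c)), mul_nonneg hb (sq_nonneg (b-c)), mul_nonneg hc (sq_nonneg (a-c)), mul_nonneg (mul_nonneg ha ha) hb, mul_nonneg (mul_nonneg ha ha) hc, mul_nonneg (mul_nonneg hb hb) ha, mul_nonneg (mul_nonneg hb hb) hc, mul_nonneg (mul_nonneg hc hc) ha]

theorem Hc101 (a b c : ℝ) (ha : 0 ≤ a) (hb : 0 ≤ b) (hc : 0 ≤ c) :
    0 ≤ 109/1350*(a+b+c)^3 - a*b*c - (a+b+c)*(a^2+b^2+c^2)/25 + (2*(a+b+c)/25 - c)*a^2/4 + (2*(a+b+c)/25 - a)*c^2/4 := by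
  linarith [mul_nonneg ha (sq_nonneg (a-b)), mul_nonneg ha (sq_nonneg (a-c)), mul_nonneg ha (sq_nonneg (b-c)), mul_nonneg hb (sq_nonneg (a-b)), mul_nonneg hb (sq_nonneg (a-c)), mul_nonneg hb (sq_nonneg (b-c)), mul_nonneg hc (sq_nonneg (a-c)), mul_nonneg (mul_nonneg ha ha) hb, mul_nonneg (mul_nonneg hb hb) ha, mul_nonneg (mul_nonneg hb hb) hc]

theorem Hc110 (a b c : ℝ) (ha : 0 ≤ a) (hb : 0 ≤ b) (hc : 0 ≤ c) :
    0 ≤ 109/1350*(a+b+c)^3 - a*b*c - (a+b+c)*(a^2+b^2+c^2)/25 + (2*(a+b+c)/25 - c)*a^2/4 + (b - 23*(a+b+c)/25)*b^2/4 := by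
  linarith [mul_nonneg ha (sq_nonneg (a-b)), mul_nonneg ha (sq_nonneg (a-c)), mul_nonneg ha (sq_nonneg (b-c)), mul_nonneg hb (sq_nonneg (a-b)), mul_nonneg hb (sq_nonneg (a-c)), mul_nonneg hb (sq_nonneg (b-c)), mul_nonneg hc (sq_nonneg (a-c)), mul_nonneg (mul_nonneg ha ha) hc, mul_nonneg (mul_nonneg hc hc) ha, mul_nonneg ha (sq_nonneg (c-b/2))]

theorem Hc111 (a b c : ℝ) (ha : 0 ≤ a) (hb : 0 ≤ b) (hc : 0 ≤ c) :
    0 ≤ 109/1350*(a+b+c)^3 - a*b*c - (a+b+c)*(a^2+b^2+c^2)/25 + (2*(a+b+c)/25 - c)*a^2/4 + (b - 23*(a+b+c)/25)*b^2/4 + (2*(a+b+c)/25 - a)*c^2/4 := by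
  linarith [mul_nonneg ha (sq_nonneg (a-b)), mul_nonneg ha (sq_nonneg (a-c)), mul_nonneg ha (sq_nonneg (b-c)), mul_nonneg hb (sq_nonneg (a-b)), mul_nonneg hb (sq_nonneg (a-c)), mul_nonneg hb (sq_nonneg (b-c)), mul_nonneg hc (sq_nonneg (a-c))]

set_option maxHeartbeats 1000000 in
theorem keyG (a b c u v w : ℝ) (ha : 0 ≤ a) (hb : 0 ≤ b) (hc : 0 ≤ c)
    (h : a + b + c = 1) (hu0 : 0 ≤ u) (hu : u ≤ a^2/4) (hv0 : 0 ≤ v) (hv : v ≤ b^2/4)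
    (hw0 : 0 ≤ w) (hw : w ≤ c^2/4) :
    v*(1-b) + a*b*c + u*c + w*a + (1/25)*(a^2+b^2+c^2-2*u-2*v-2*w-1/6) ≤ 2/27 := by
  rcases le_total c (2/25) with hcs | hcs <;> rcases le_total b (23/25) with hbs | hbs <;>
    rcases le_total a (2/25) with has | has
  · have hH := Hc010 a b c ha hb hc
    rw [h] at hH
    have fu := mul_nonneg (by linarith : (0:ℝ) ≤ 2/25 - c) hu0
    have fv := mul_nonneg (by linarith : (0:ℝ) ≤ 23/25 - b) (by linarith : (0:ℝ) ≤ b^2/4 - v)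
    have fw := mul_nonneg (by linarith : (0:ℝ) ≤ 2/25 - a) hw0
    linarith [hH, fu, fv, fw]
  · have hH := Hc011 a b c ha hb hc
    rw [h] at hH
    have fu := mul_nonneg (by linarith : (0:ℝ) ≤ 2/25 - c) hu0
    have fv := mul_nonneg (by linarith : (0:ℝ) ≤ 23/25 - b) (by linarith : (0:ℝ) ≤ b^2/4 - v)
    have fw := mul_nonneg (by linarith : (0:ℝ) ≤ a - 2/25) (by linarith : (0:ℝ) ≤ c^2/4 - w)
    linarith [hH, fu, fv, fw]
  · have hH := Hc000 a b c ha hb hc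
    rw [h] at hH
    have fu := mul_nonneg (by linarith : (0:ℝ) ≤ 2/25 - c) hu0
    have fv := mul_nonneg (by linarith : (0:ℝ) ≤ b - 23/25) hv0
    have fw := mul_nonneg (by linarith : (0:ℝ) ≤ 2/25 - a) hw0
    linarith [hH, fu, fv, fw]
  · have hH := Hc001 a b c ha hb hc
    rw [h] at hH
    have fu := mul_nonneg (by linarith : (0:ℝ) ≤ 2/25 - c) hu0
    have fv := mul_nonneg (by linarith : (0:ℝ) ≤ b - 23/25) hv0
    have fw := mul_nonneg (by linarith : (0:ℝ) ≤ a - 2/25) (by linarith : (0:ℝ) ≤ c^2/4 - w)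
    linarith [hH, fu, fv, fw]
  · have hH := Hc110 a b c ha hb hc
    rw [h] at hH
    have fu := mul_nonneg (by linarith : (0:ℝ) ≤ c - 2/25) (by linarith : (0:ℝ) ≤ a^2/4 - u)
    have fv := mul_nonneg (by linarith : (0:ℝ) ≤ 23/25 - b) (by linarith : (0:ℝ) ≤ b^2/4 - v)
    have fw := mul_nonneg (by linarith : (0:ℝ) ≤ 2/25 - a) hw0
    linarith [hH, fu, fv, fw]
  · have hH := Hc111 a b c ha hb hc
    rw [h] at hH
    have fu := mul_nonneg (by linarith : (0:ℝ) ≤ c - 2/25) (by linarith : (0:ℝ) ≤ a^2/4 - u)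
    have fv := mul_nonneg (by linarith : (0:ℝ) ≤ 23/25 - b) (by linarith : (0:ℝ) ≤ b^2/4 - v)
    have fw := mul_nonneg (by linarith : (0:ℝ) ≤ a - 2/25) (by linarith : (0:ℝ) ≤ c^2/4 - w)
    linarith [hH, fu, fv, fw]
  · have hH := Hc100 a b c ha hb hc
    rw [h] at hH
    have fu := mul_nonneg (by linarith : (0:ℝ) ≤ c - 2/25) (by linarith : (0:ℝ) ≤ a^2/4 - u)
    have fv := mul_nonneg (by linarith : (0:ℝ) ≤ b - 23/25) hv0
    have fw := mul_nonneg (by linarith : (0:ℝ) ≤ 2/25 - a) hw0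
    linarith [hH, fu, fv, fw]
  · have hH := Hc101 a b c ha hb hc
    rw [h] at hH
    have fu := mul_nonneg (by linarith : (0:ℝ) ≤ c - 2/25) (by linarith : (0:ℝ) ≤ a^2/4 - u)
    have fv := mul_nonneg (by linarith : (0:ℝ) ≤ b - 23/25) hv0
    have fw := mul_nonneg (by linarith : (0:ℝ) ≤ a - 2/25) (by linarith : (0:ℝ) ≤ c^2/4 - w)
    linarith [hH, fu, fv, fw]

theorem key_ineq (y1 y2 y3 y4 y5 y6 : ℝ) (h1 : 0 ≤ y1) (h2 : 0 ≤ y2) (h3 : 0 ≤ y3)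
    (h4 : 0 ≤ y4) (h5 : 0 ≤ y5) (h6 : 0 ≤ y6) (hs : y1 + y2 + y3 + y4 + y5 + y6 = 1) :
    (1/25) * ((y1-1/6)^2 + (y2-1/6)^2 + (y3-1/6)^2 + (y4-1/6)^2 + (y5-1/6)^2 + (y6-1/6)^2)
      ≤ 2/27 - (y3 * y6 * (y1 + y2 + y4 + y5) + (y1 + y2) * (y3 + y6) * (y4 + y5)
        + y1 * y2 * (y4 + y5) + y4 * y5 * (y1 + y2)) := by
  have e2 : y3*y6*(y1+y2+y4+y5) = y3*y6*(1-(y3+y6)) := by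
    rw [show y1+y2+y4+y5 = 1-(y3+y6) from by linarith]
  have hG := keyG (y1+y2) (y3+y6) (y4+y5) (y1*y2) (y3*y6) (y4*y5)
    (by linarith) (by linarith) (by linarith) (by linarith)
    (mul_nonneg h1 h2) (by nlinarith [sq_nonneg (y1-y2)])
    (mul_nonneg h3 h6) (by nlinarith [sq_nonneg (y3-y6)])
    (mul_nonneg h4 h5) (by nlinarith [sq_nonneg (y4-y5)])
  linarith [hG, e2]

theorem abs_le_of_sq (x η : ℝ) (hη : 0 < η) (h : x^2 ≤ 25 * η) : |x| ≤ 5 * Real.sqrt η := by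
  have h5 : (5 : ℝ) * Real.sqrt η = Real.sqrt (25 * η) := by
    rw [show (25:ℝ) * η = 5^2 * η by ring, Real.sqrt_mul (by positivity),
      Real.sqrt_sq (by norm_num : (0:ℝ) ≤ 5)]
  rw [h5, ← Real.sqrt_sq_eq_abs]
  exact Real.sqrt_le_sqrt h

theorem stmt_15 : ∃ η₀ : ℝ, 0 < η₀ ∧ ∀ η : ℝ, 0 < η → η < η₀ →
    ∀ y1 y2 y3 y4 y5 y6 : ℝ,
      0 ≤ y1 → 0 ≤ y2 → 0 ≤ y3 → 0 ≤ y4 → 0 ≤ y5 → 0 ≤ y6 →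
      y1 + y2 + y3 + y4 + y5 + y6 = 1 →
      2 / 27 - η ≤ y3 * y6 * (y1 + y2 + y4 + y5) + (y1 + y2) * (y3 + y6) * (y4 + y5)
        + y1 * y2 * (y4 + y5) + y4 * y5 * (y1 + y2) →
      |y1 - 1 / 6| ≤ 5 * Real.sqrt η ∧ |y2 - 1 / 6| ≤ 5 * Real.sqrt η ∧
      |y3 - 1 / 6| ≤ 5 * Real.sqrt η ∧ |y4 - 1 / 6| ≤ 5 * Real.sqrt η ∧
      |y5 - 1 / 6| ≤ 5 * Real.sqrt η ∧ |y6 - 1 / 6| ≤ 5 * Real.sqrt η := by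
  refine ⟨1, one_pos, fun η hη _ y1 y2 y3 y4 y5 y6 h1 h2 h3 h4 h5 h6 hs hp => ?_⟩
  have key := key_ineq y1 y2 y3 y4 y5 y6 h1 h2 h3 h4 h5 h6 hs
  have q1 : (y1-1/6)^2 ≤ 25 * η := by
    linarith [sq_nonneg (y2-1/6), sq_nonneg (y3-1/6), sq_nonneg (y4-1/6),
      sq_nonneg (y5-1/6), sq_nonneg (y6-1/6)]
  have q2 : (y2-1/6)^2 ≤ 25 * η := by
    linarith [sq_nonneg (y1-1/6), sq_nonneg (y3-1/6), sq_nonneg (y4-1/6),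
      sq_nonneg (y5-1/6), sq_nonneg (y6-1/6)]
  have q3 : (y3-1/6)^2 ≤ 25 * η := by
    linarith [sq_nonneg (y1-1/6), sq_nonneg (y2-1/6), sq_nonneg (y4-1/6),
      sq_nonneg (y5-1/6), sq_nonneg (y6-1/6)]
  have q4 : (y4-1/6)^2 ≤ 25 * η := by
    linarith [sq_nonneg (y1-1/6), sq_nonneg (y2-1/6), sq_nonneg (y3-1/6),
      sq_nonneg (y5-1/6), sq_nonneg (y6-1/6)]
  have q5 : (y5-1/6)^2 ≤ 25 * η := by
    linarith [sq_nonneg (y1-1/6), sq_nonneg (y2-1/6), sq_nonneg (y3-1/6),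
      sq_nonneg (y4-1/6), sq_nonneg (y6-1/6)]
  have q6 : (y6-1/6)^2 ≤ 25 * η := by
    linarith [sq_nonneg (y1-1/6), sq_nonneg (y2-1/6), sq_nonneg (y3-1/6),
      sq_nonneg (y4-1/6), sq_nonneg (y5-1/6)]
  exact ⟨abs_le_of_sq _ _ hη q1, abs_le_of_sq _ _ hη q2, abs_le_of_sq _ _ hη q3,
    abs_le_of_sq _ _ hη q4, abs_le_of_sq _ _ hη q5, abs_le_of_sq _ _ hη q6⟩
end

section
/- Let a, d be nonnegative reals with 2a + 4d = 1 and (a+d)^2 * 2d >= 1/27 - eta/2 for some eta >= 0. Then (a - 1/6)^2 <= 8 * (eta/2), i.e., |a - 1/6| <= 2*eta^{1/2}. -/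
theorem stmt_16 (a d η : ℝ) (ha : 0 ≤ a) (hd : 0 ≤ d) (hη : 0 ≤ η)
    (hsum : 2 * a + 4 * d = 1) (h : 1 / 27 - η / 2 ≤ (a + d) ^ 2 * (2 * d)) :
    (a - 1 / 6) ^ 2 ≤ 8 * (η / 2) ∧ |a - 1 / 6| ≤ 2 * Real.sqrt η := by
  have hd' : d = (1 - 2 * a) / 4 := by linarith
  have key : (a - 1 / 6) ^ 2 ≤ 8 * (η / 2) := by
    have h1 : 1 / 27 - (a + d) ^ 2 * (2 * d) = (a - 1/6)^2 * (a/4 + 5/24) := by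
      subst hd'; ring
    nlinarith [sq_nonneg (a - 1/6)]
  refine ⟨key, ?_⟩
  have : |a - 1/6| ≤ Real.sqrt (4 * η) := by
    rw [← Real.sqrt_sq_eq_abs]
    exact Real.sqrt_le_sqrt (by linarith)
  calc |a - 1/6| ≤ Real.sqrt (4 * η) := this
    _ = 2 * Real.sqrt η := by
        rw [show (4:ℝ) * η = 2^2 * η by ring, Real.sqrt_mul (by positivity),
          Real.sqrt_sq (by norm_num)]
end

section
/- Let r >= 2 and let H be an r-graph in which every two non-adjacent vertices have equal links (i.e., there is no pair of non-adjacent non-equivalent vertices). Let T be a set of vertices containing exactly one vertex from each equivalence class (where u ~ v iff u, v are non-adjacent and L(u) = L(v)). Then the induced subhypergraph H[T] is 2-covered (every pair of vertices of T is contained in an edge of H[T]) and H is a blowup of H[T]. -/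
theorem stmt_17 {V : Type*} [Fintype V] [DecidableEq V] (r : ℕ) (hr : 2 ≤ r)
    (H : Finset (Finset V)) (hcard : ∀ E ∈ H, E.card = r)
    (heq : ∀ u v : V, u ≠ v → (¬ ∃ E ∈ H, u ∈ E ∧ v ∈ E) →
      ∀ A : Finset V, (u ∉ A ∧ insert u A ∈ H) ↔ (v ∉ A ∧ insert v A ∈ H))
    (T : Finset V)
    (hT : ∀ v : V, ∃! t : V, t ∈ T ∧ (t = v ∨ ¬ ∃ E ∈ H, t ∈ E ∧ v ∈ E)) :
    (∀ u ∈ T, ∀ v ∈ T, u ≠ v → ∃ E ∈ H, E ⊆ T ∧ u ∈ E ∧ v ∈ E) ∧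
    (∃ g : V → V, (∀ v : V, g v ∈ T ∧ (g v = v ∨ ¬ ∃ E ∈ H, g v ∈ E ∧ v ∈ E)) ∧
      ∀ E : Finset V, E ∈ H ↔
        (E.card = r ∧ (E.image g).card = r ∧ E.image g ∈ H)) := by
  classical
  choose g hgT hgor using fun v => (hT v).exists
  have hguniq : ∀ v t, t ∈ T → (t = v ∨ ¬ ∃ E ∈ H, t ∈ E ∧ v ∈ E) → t = g v := by
    intro v t ht hor
    exact (hT v).unique ⟨ht, hor⟩ ⟨hgT v, hgor v⟩
  have gfix : ∀ t ∈ T, g t = t := fun t ht => (hguniq t t ht (Or.inl rfl)).symm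
  have gg : ∀ v, g (g v) = g v := fun v => gfix _ (hgT v)
  have hna : ∀ v, g v ≠ v → ¬ ∃ E ∈ H, g v ∈ E ∧ v ∈ E :=
    fun v hne => (hgor v).resolve_left hne
  have hna' : ∀ v, g v ≠ v → ¬ ∃ E ∈ H, v ∈ E ∧ g v ∈ E := by
    intro v hne ⟨E, hE, h1, h2⟩
    exact hna v hne ⟨E, hE, h2, h1⟩
  have imgfix : ∀ E : Finset V, (∀ w ∈ E, g w = w) → E.image g = E := by
    intro E hfix
    rw [Finset.image_congr (g := id) (fun x hx => hfix x hx), Finset.image_id]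
  have fixall : ∀ E : Finset V, (E.filter fun w => g w ≠ w).card = 0 → ∀ w ∈ E, g w = w := by
    intro E h0 w hw
    by_contra hne
    have : w ∈ E.filter fun w => g w ≠ w := Finset.mem_filter.2 ⟨hw, hne⟩
    simp [Finset.card_eq_zero.1 h0] at this
  -- image under g of E' agrees with that of E after replacement
  have himgeq : ∀ (E : Finset V) (w : V), w ∈ E →
      (insert (g w) (E.erase w)).image g = E.image g := by
    intro E w hw
    rw [Finset.image_insert, gg]
    conv_rhs => rw [← Finset.insert_erase hw, Finset.image_insert]
  have hfiltle : ∀ (E : Finset V) (w : V) (n : ℕ), w ∈ E → g w ≠ w →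
      (E.filter fun x => g x ≠ x).card ≤ n + 1 →
      ((insert (g w) (E.erase w)).filter fun x => g x ≠ x).card ≤ n := by
    intro E w n hw hne hle
    have hsub : ((insert (g w) (E.erase w)).filter fun x => g x ≠ x) ⊆
        (E.filter fun x => g x ≠ x).erase w := by
      intro x hx
      obtain ⟨hx1, hx2⟩ := Finset.mem_filter.1 hx
      rcases Finset.mem_insert.1 hx1 with h1 | h1
      · exact absurd (by rw [h1, gg]) hx2
      · exact Finset.mem_erase.2 ⟨(Finset.mem_erase.1 h1).1,
          Finset.mem_filter.2 ⟨(Finset.mem_erase.1 h1).2, hx2⟩⟩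
    have hwmem : w ∈ E.filter fun x => g x ≠ x := Finset.mem_filter.2 ⟨hw, hne⟩
    have := Finset.card_le_card hsub
    rw [Finset.card_erase_of_mem hwmem] at this
    have hpos : 1 ≤ (E.filter fun x => g x ≠ x).card := Finset.card_pos.2 ⟨w, hwmem⟩
    omega
  -- forward: edges map to edges
  have key1 : ∀ E ∈ H, E.image g ∈ H := by
    have main : ∀ n, ∀ E ∈ H, (E.filter fun w => g w ≠ w).card ≤ n → E.image g ∈ H := by
      intro n
      induction n with
      | zero =>
        intro E hE h0
        rwa [imgfix E (fixall E (Nat.le_zero.1 h0))]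
      | succ n ih =>
        intro E hE hle
        by_cases h : ∃ w ∈ E, g w ≠ w
        · obtain ⟨w, hw, hne⟩ := h
          have hE'H : insert (g w) (E.erase w) ∈ H := by
            have := (heq w (g w) (Ne.symm hne) (hna' w hne) (E.erase w)).1
              ⟨Finset.notMem_erase w E, by rwa [Finset.insert_erase hw]⟩
            exact this.2
          have := ih (insert (g w) (E.erase w)) hE'H (hfiltle E w n hw hne hle)
          rwa [himgeq E w hw] at this
        · push_neg at h
          rwa [imgfix E h]
    exact fun E hE => main _ E hE le_rfl
  -- backward
  have key2 : ∀ n, ∀ E : Finset V, (E.filter fun w => g w ≠ w).card ≤ n →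
      E.card = r → (E.image g).card = r → E.image g ∈ H → E ∈ H := by
    intro n
    induction n with
    | zero =>
      intro E h0 hcE hcI hI
      rwa [← imgfix E (fixall E (Nat.le_zero.1 h0))]
    | succ n ih =>
      intro E hle hcE hcI hI
      by_cases h : ∃ w ∈ E, g w ≠ w
      · obtain ⟨w, hw, hne⟩ := h
        have hinj : Set.InjOn g E := Finset.card_image_iff.1 (by rw [hcI, hcE])
        have hgwE : g w ∉ E := fun h' => hne (hinj h' hw (gg w))
        have hcE' : (insert (g w) (E.erase w)).card = r := by
          rw [Finset.card_insert_of_notMem (fun h' => hgwE (Finset.mem_of_mem_erase h')),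
            Finset.card_erase_of_mem hw, hcE]
          omega
        have hE'H : insert (g w) (E.erase w) ∈ H :=
          ih _ (hfiltle E w n hw hne hle) hcE'
            (by rw [himgeq E w hw]; exact hcI) (by rw [himgeq E w hw]; exact hI)
        obtain ⟨-, hfin⟩ := (heq w (g w) (Ne.symm hne) (hna' w hne) (E.erase w)).2
          ⟨fun h' => hgwE (Finset.mem_of_mem_erase h'), hE'H⟩
        rwa [Finset.insert_erase hw] at hfin
      · push_neg at h
        rwa [← imgfix E h]
  constructor
  · intro u hu v hv huv
    have hadj : ∃ E ∈ H, u ∈ E ∧ v ∈ E := by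
      by_contra hnadj
      exact huv ((hguniq v u hu (Or.inr hnadj)).trans (gfix v hv))
    obtain ⟨E, hE, huE, hvE⟩ := hadj
    refine ⟨E.image g, key1 E hE, ?_, ?_, ?_⟩
    · intro x hx
      obtain ⟨y, _, rfl⟩ := Finset.mem_image.1 hx
      exact hgT y
    · exact Finset.mem_image.2 ⟨u, huE, gfix u hu⟩
    · exact Finset.mem_image.2 ⟨v, hvE, gfix v hv⟩
  · refine ⟨g, fun v => ⟨hgT v, hgor v⟩, fun E => ⟨?_, ?_⟩⟩
    · intro hE
      exact ⟨hcard E hE, hcard _ (key1 E hE), key1 E hE⟩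
    · rintro ⟨h1, h2, h3⟩
      exact key2 _ E le_rfl h1 h2 h3
end

section
/- Any intersecting 2-covered 3-graph T on at least 5 vertices in which every two edges intersect in exactly two vertices, containing edges E1 = {u,v,w1} and E2 = {u,v,w2} with w1 ≠ w2, and containing an edge avoiding u and an edge avoiding v, must contain the edges {v,w1,w2} and {u,w1,w2}, and then the four edges E1, E2, {v,w1,w2}, {u,w1,w2} span 4 vertices and have transversal number 2. -/
lemma card3_ne {V : Type*} [DecidableEq V] {a b c : V}
    (h : ({a, b, c} : Finset V).card = 3) : a ≠ b ∧ a ≠ c ∧ b ≠ c := by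
  have aux : ∀ x y : V, ({x, y} : Finset V).card ≤ 2 := by
    intro x y
    have := Finset.card_insert_le x ({y} : Finset V)
    simpa using this
  refine ⟨?_, ?_, ?_⟩ <;> rintro rfl
  · have hsub : ({a, a, c} : Finset V) ⊆ {a, c} := by
      intro x hx; simp only [Finset.mem_insert, Finset.mem_singleton] at hx ⊢; tauto
    have := (Finset.card_le_card hsub).trans (aux a c); omega
  · have hsub : ({a, b, a} : Finset V) ⊆ {a, b} := by
      intro x hx; simp only [Finset.mem_insert, Finset.mem_singleton] at hx ⊢; tauto
    have := (Finset.card_le_card hsub).trans (aux a b); omega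
  · have hsub : ({a, b, b} : Finset V) ⊆ {a, b} := by
      intro x hx; simp only [Finset.mem_insert, Finset.mem_singleton] at hx ⊢; tauto
    have := (Finset.card_le_card hsub).trans (aux a b); omega

theorem stmt_18 {V : Type*} [Fintype V] [DecidableEq V] (hV : 5 ≤ Fintype.card V)
    (T : Finset (Finset V)) (hcard : ∀ E ∈ T, E.card = 3)
    (hcov : ∀ u v : V, u ≠ v → ∃ E ∈ T, u ∈ E ∧ v ∈ E)
    (hintersecting : ∀ E1 ∈ T, ∀ E2 ∈ T, (E1 ∩ E2).Nonempty)
    (hint2 : ∀ E1 ∈ T, ∀ E2 ∈ T, E1 ≠ E2 → (E1 ∩ E2).card = 2)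
    (u v w1 w2 : V) (hw : w1 ≠ w2)
    (hE1 : ({u, v, w1} : Finset V) ∈ T) (hE2 : ({u, v, w2} : Finset V) ∈ T)
    (hu : ∃ E ∈ T, u ∉ E) (hv : ∃ E ∈ T, v ∉ E) :
    ({v, w1, w2} : Finset V) ∈ T ∧ ({u, w1, w2} : Finset V) ∈ T ∧
    ({u, v, w1, w2} : Finset V).card = 4 ∧
    (∃ S : Finset V, S.card = 2 ∧
      ∀ E ∈ ({{u, v, w1}, {u, v, w2}, {v, w1, w2}, {u, w1, w2}} : Finset (Finset V)),
        (E ∩ S).Nonempty) ∧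
    ¬ ∃ S : Finset V, S.card ≤ 1 ∧
      ∀ E ∈ ({{u, v, w1}, {u, v, w2}, {v, w1, w2}, {u, w1, w2}} : Finset (Finset V)),
        (E ∩ S).Nonempty := by
  obtain ⟨huv, huw1, hvw1⟩ := card3_ne (hcard _ hE1)
  obtain ⟨-, huw2, hvw2⟩ := card3_ne (hcard _ hE2)
  -- generic claim
  have key : ∀ x y : V, x ≠ y → ∀ F ∈ T, x ∉ F →
      ({x, y, w1} : Finset V) ∈ T → ({x, y, w2} : Finset V) ∈ T →
      x ≠ w1 → x ≠ w2 → y ≠ w1 → y ≠ w2 → F = {y, w1, w2} := by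
    intro x y hxy F hF hxF hA hB hxw1 hxw2 hyw1 hyw2
    have hFA : F ≠ ({x, y, w1} : Finset V) := by rintro rfl; exact hxF (by simp)
    have hFB : F ≠ ({x, y, w2} : Finset V) := by rintro rfl; exact hxF (by simp)
    have h2A := hint2 F hF _ hA hFA
    have h2B := hint2 F hF _ hB hFB
    have subA : F ∩ {x, y, w1} ⊆ ({y, w1} : Finset V) := by
      intro z hz
      simp only [Finset.mem_inter, Finset.mem_insert, Finset.mem_singleton] at hz ⊢
      rcases hz.2 with rfl | h; · exact absurd hz.1 hxF
      · exact h
    have subB : F ∩ {x, y, w2} ⊆ ({y, w2} : Finset V) := by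
      intro z hz
      simp only [Finset.mem_inter, Finset.mem_insert, Finset.mem_singleton] at hz ⊢
      rcases hz.2 with rfl | h; · exact absurd hz.1 hxF
      · exact h
    have cardYW1 : ({y, w1} : Finset V).card ≤ 2 := Finset.card_insert_le _ _ |>.trans (by simp)
    have cardYW2 : ({y, w2} : Finset V).card ≤ 2 := Finset.card_insert_le _ _ |>.trans (by simp)
    have eqA := Finset.eq_of_subset_of_card_le subA (by omega)
    have eqB := Finset.eq_of_subset_of_card_le subB (by omega)
    have hyF : y ∈ F := by
      have : y ∈ F ∩ {x, y, w1} := by rw [eqA]; simp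
      exact (Finset.mem_inter.mp this).1
    have hw1F : w1 ∈ F := by
      have : w1 ∈ F ∩ {x, y, w1} := by rw [eqA]; simp
      exact (Finset.mem_inter.mp this).1
    have hw2F : w2 ∈ F := by
      have : w2 ∈ F ∩ {x, y, w2} := by rw [eqB]; simp
      exact (Finset.mem_inter.mp this).1
    have hsub : ({y, w1, w2} : Finset V) ⊆ F := by
      intro z hz
      simp only [Finset.mem_insert, Finset.mem_singleton] at hz
      rcases hz with rfl | rfl | rfl <;> assumption
    have hc : ({y, w1, w2} : Finset V).card = 3 := by
      rw [Finset.card_insert_of_notMem (by simp [hyw1, hyw2]),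
        Finset.card_insert_of_notMem (by simp [hw]), Finset.card_singleton]
    exact (Finset.eq_of_subset_of_card_le hsub (by rw [hcard F hF, hc])).symm
  obtain ⟨Fu, hFu, hFu'⟩ := hu
  obtain ⟨Fv, hFv, hFv'⟩ := hv
  have m1 : ({v, w1, w2} : Finset V) ∈ T := by
    have := key u v huv Fu hFu hFu' hE1 hE2 huw1 huw2 hvw1 hvw2
    rwa [this] at hFu
  have m2 : ({u, w1, w2} : Finset V) ∈ T := by
    have hE1' : ({v, u, w1} : Finset V) ∈ T := by rwa [Finset.insert_comm] at hE1
    have hE2' : ({v, u, w2} : Finset V) ∈ T := by rwa [Finset.insert_comm] at hE2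
    have := key v u huv.symm Fv hFv hFv' hE1' hE2' hvw1 hvw2 huw1 huw2
    rwa [this] at hFv
  refine ⟨m1, m2, ?_, ⟨{u, w1}, ?_, ?_⟩, ?_⟩
  · rw [Finset.card_insert_of_notMem (by simp [huv, huw1, huw2]),
      Finset.card_insert_of_notMem (by simp [hvw1, hvw2]),
      Finset.card_insert_of_notMem (by simp [hw]), Finset.card_singleton]
  · rw [Finset.card_insert_of_notMem (by simp [huw1]), Finset.card_singleton]
  · intro E hE
    simp only [Finset.mem_insert, Finset.mem_singleton] at hE
    rcases hE with rfl | rfl | rfl | rfl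
    · exact ⟨u, by simp⟩
    · exact ⟨u, by simp⟩
    · exact ⟨w1, by simp⟩
    · exact ⟨u, by simp⟩
  · rintro ⟨S, hS1, hS2⟩
    obtain ⟨a, ha⟩ := hS2 {u, v, w1} (by simp)
    obtain ⟨b, hb⟩ := hS2 {u, v, w2} (by simp)
    obtain ⟨c, hc⟩ := hS2 {v, w1, w2} (by simp [Finset.mem_insert])
    obtain ⟨d, hd⟩ := hS2 {u, w1, w2} (by simp [Finset.mem_insert])
    simp only [Finset.mem_inter, Finset.mem_insert, Finset.mem_singleton] at ha hb hc hd
    have hone := Finset.card_le_one.mp hS1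
    have hab : a = b := hone a ha.2 b hb.2
    have hac : a = c := hone a ha.2 c hc.2
    have had : a = d := hone a ha.2 d hd.2
    subst hab hac had
    rcases ha.1 with rfl | rfl | rfl
    · rcases hc.1 with h | h | h
      exacts [huv h, huw1 h, huw2 h]
    · rcases hd.1 with h | h | h
      exacts [huv h.symm, hvw1 h, hvw2 h]
    · rcases hb.1 with h | h | h
      exacts [huw1 h.symm, hvw1 h.symm, hw h]
end
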